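/- arXiv:2006.08325 — 4 statements merged into one kernel-verified Lean document; each statement's English description precedes it below -/
import Mathlib

section
/- Let (S,𝓐,μ) be a measure space and let 2 ≤ p < ∞. Then L^p(μ) is (2,√(p−1))-smooth; that is, for all f, g ∈ L^p(μ) one has ‖f+g‖_p² + ‖f−g‖_p² ≤ 2‖f‖_p² + 2(p−1)‖g‖_p². -/
open MeasureTheory

section Aux
open Real Set
/-- two-point concavity of `x ↦ x^θ` for `θ ∈ [0,1]`. -/
lemma concave2 {u v θ : ℝ} (hu : 0 ≤ u) (hv : 0 ≤ v) (h0 : 0 ≤ θ) (h1 : θ ≤ 1) :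
    u ^ θ + v ^ θ ≤ 2 ^ (1 - θ) * (u + v) ^ θ := by
  rcases eq_or_lt_of_le h0 with h | h
  · norm_num [← h]
  · have hθ : (0:ℝ) < θ := h
    have hp : 1 ≤ 1 / θ := by
      rw [le_div_iff₀ hθ]; linarith
    have key := Real.rpow_arith_mean_le_arith_mean_rpow (Finset.univ)
      ![1/2, 1/2] ![u ^ θ, v ^ θ] (by
        intro i _
        fin_cases i <;> norm_num)
      (by rw [Fin.sum_univ_two]; norm_num)
      (by
        intro i _
        fin_cases i <;> simp [Real.rpow_nonneg, hu, hv])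
      hp
    simp only [Fin.sum_univ_two, Matrix.cons_val_zero, Matrix.cons_val_one,
      Matrix.head_cons] at key
    have hu' : (u ^ θ) ^ (1/θ) = u := by
      rw [← Real.rpow_mul hu, mul_one_div_cancel hθ.ne', Real.rpow_one]
    have hv' : (v ^ θ) ^ (1/θ) = v := by
      rw [← Real.rpow_mul hv, mul_one_div_cancel hθ.ne', Real.rpow_one]
    rw [hu', hv'] at key
    -- key : (1/2 * u^θ + 1/2 * v^θ) ^ (1/θ) ≤ 1/2*u + 1/2*v
    have h2 : 1/2 * u ^ θ + 1/2 * v ^ θ ≤ ((u+v)/2) ^ θ := by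
      have := Real.rpow_le_rpow (Real.rpow_nonneg (by positivity) _) key h0
      rwa [← Real.rpow_mul (by positivity), one_div_mul_cancel hθ.ne', Real.rpow_one,
        show 1/2*u + 1/2*v = (u+v)/2 by ring] at this
    have h3 : ((u+v)/2) ^ θ = (u+v) ^ θ / 2 ^ θ := Real.div_rpow (by linarith) (by norm_num : (0:ℝ) ≤ 2) θ
    have h4 : (2:ℝ) ^ (1-θ) = 2 / 2 ^ θ := by
      rw [Real.rpow_sub (by norm_num), Real.rpow_one]
    have h5 : (0:ℝ) < 2 ^ θ := Real.rpow_pos_of_pos (by norm_num) θ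
    rw [h4]
    calc u ^ θ + v ^ θ = 2 * (1/2 * u ^ θ + 1/2 * v ^ θ) := by ring
    _ ≤ 2 * ((u+v) ^ θ / 2 ^ θ) := by
        rw [← h3]; linarith
    _ = 2 / 2 ^ θ * (u+v) ^ θ := by ring

/-- Base case : `0 ≤ r ≤ 2`. -/
lemma bcl_base {m r s : ℝ} (hm : 1 ≤ m) (hr0 : 0 ≤ r) (hr2 : r ≤ 2)
    (hs0 : 0 ≤ s) (hs1 : s ≤ 1) :
    (1+s) ^ r + (1-s) ^ r ≤ 2 * (1+m*s^2) ^ (r/2) := by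
  have h1s : (0:ℝ) ≤ 1 + s := by linarith
  have h2s : (0:ℝ) ≤ 1 - s := by linarith
  have e1 : (1+s) ^ r = ((1+s)^2) ^ (r/2) := by
    rw [← Real.rpow_natCast (1+s) 2, ← Real.rpow_mul h1s]
    congr 1; ring
  have e2 : (1-s) ^ r = ((1-s)^2) ^ (r/2) := by
    rw [← Real.rpow_natCast (1-s) 2, ← Real.rpow_mul h2s]
    congr 1; ring
  have hkey := concave2 (u := (1+s)^2) (v := (1-s)^2) (θ := r/2)
    (by positivity) (by positivity) (by linarith) (by linarith)
  have e3 : (1+s)^2 + (1-s)^2 = 2 * (1 + s^2) := by ring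
  rw [e3] at hkey
  have e4 : (2 * (1 + s^2)) ^ (r/2) = 2 ^ (r/2) * (1+s^2) ^ (r/2) :=
    Real.mul_rpow (by norm_num) (by positivity)
  have e5 : (2:ℝ) ^ (1 - r/2) * (2 ^ (r/2)) = 2 := by
    rw [← Real.rpow_add (by norm_num)]; norm_num
  have e6 : (1+s^2 : ℝ) ^ (r/2) ≤ (1+m*s^2) ^ (r/2) := by
    apply Real.rpow_le_rpow (by positivity) _ (by linarith)
    nlinarith
  calc (1+s) ^ r + (1-s) ^ r = ((1+s)^2) ^ (r/2) + ((1-s)^2) ^ (r/2) := by rw [e1, e2]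
    _ ≤ 2 ^ (1 - r/2) * (2 * (1+s^2)) ^ (r/2) := hkey
    _ = 2 * (1+s^2) ^ (r/2) := by rw [e4, ← mul_assoc, e5]
    _ ≤ 2 * (1+m*s^2) ^ (r/2) := by linarith

/-- Inductive step. -/
lemma bcl_step {m r : ℝ} (hm : 1 ≤ m) (hr : 2 ≤ r) (hrm : r - 1 ≤ m)
    (IH : ∀ x ∈ Icc (0:ℝ) 1, (1+x) ^ (r-2) + (1-x) ^ (r-2) ≤ 2 * (1+m*x^2) ^ ((r-2)/2)) :
    ∀ s ∈ Icc (0:ℝ) 1, (1+s) ^ r + (1-s) ^ r ≤ 2 * (1+m*s^2) ^ (r/2) := by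
  have hm0 : (0:ℝ) ≤ m := by linarith
  -- inner derivative of x ↦ 1 + m x^2
  have hinner : ∀ x : ℝ, HasDerivAt (fun x : ℝ => 1 + m * x^2) (m * (2*x)) x := by
    intro x
    have i1 : HasDerivAt (fun x : ℝ => x^2) (2*x) x := by
      simpa using hasDerivAt_pow 2 x
    exact (i1.const_mul m).const_add 1
  have hpos : ∀ x : ℝ, (0:ℝ) < 1 + m * x^2 := fun x => by positivity
  -- continuity helpers
  have c1 : ∀ q : ℝ, 0 ≤ q → Continuous (fun x : ℝ => (1+x) ^ q) := fun q hq =>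
    (continuous_const.add continuous_id).rpow_const (fun x => Or.inr hq)
  have c2 : ∀ q : ℝ, 0 ≤ q → Continuous (fun x : ℝ => (1-x) ^ q) := fun q hq =>
    (continuous_const.sub continuous_id).rpow_const (fun x => Or.inr hq)
  have c3 : ∀ q : ℝ, Continuous (fun x : ℝ => (1+m*x^2) ^ q) := fun q =>
    (continuous_const.add (continuous_const.mul (continuous_pow 2))).rpow_const
      (fun x => Or.inl (hpos x).ne')
  -- Step 1: the derivative-level claim
  have claim2 : ∀ x ∈ Icc (0:ℝ) 1,
      (1+x) ^ (r-1) - (1-x) ^ (r-1) ≤ 2*(r-1) * (x * (1+m*x^2) ^ ((r-2)/2)) := by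
    set ψ : ℝ → ℝ := fun x =>
      2*(r-1) * (x * (1+m*x^2) ^ ((r-2)/2)) - (1+x) ^ (r-1) + (1-x) ^ (r-1) with hψ
    have hcont : ContinuousOn ψ (Icc 0 1) :=
      (((continuous_const.mul (continuous_id.mul (c3 _))).sub
        (c1 (r-1) (by linarith))).add (c2 (r-1) (by linarith))).continuousOn
    have hmono : MonotoneOn ψ (Icc 0 1) := by
      apply monotoneOn_of_hasDerivWithinAt_nonneg (convex_Icc 0 1) hcont
        (f' := fun x => 2*(r-1) * (1 * (1+m*x^2) ^ ((r-2)/2)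
            + x * (m*(2*x) * ((r-2)/2) * (1+m*x^2) ^ ((r-2)/2 - 1)))
          - 1*(r-1)*(1+x) ^ (r-1-1) + (0-1)*(r-1)*(1-x) ^ (r-1-1))
      · intro x hx
        rw [interior_Icc] at hx
        obtain ⟨hx0, hx1⟩ := hx
        have hB : HasDerivAt (fun x : ℝ => (1+m*x^2) ^ ((r-2)/2))
            (m*(2*x) * ((r-2)/2) * (1+m*x^2) ^ ((r-2)/2 - 1)) x :=
          (hinner x).rpow_const (Or.inl (hpos x).ne')
        have hA : HasDerivAt (fun x : ℝ => x * (1+m*x^2) ^ ((r-2)/2))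
            (1 * (1+m*x^2) ^ ((r-2)/2)
              + x * (m*(2*x) * ((r-2)/2) * (1+m*x^2) ^ ((r-2)/2 - 1))) x :=
          (hasDerivAt_id x).mul hB
        have h1p : HasDerivAt (fun x : ℝ => (1+x) ^ (r-1)) (1*(r-1)*(1+x) ^ (r-1-1)) x :=
          ((hasDerivAt_id x).const_add 1).rpow_const (Or.inl (by linarith : (1:ℝ)+x ≠ 0))
        have h1m : HasDerivAt (fun x : ℝ => (1-x) ^ (r-1)) ((0-1)*(r-1)*(1-x) ^ (r-1-1)) x :=
          ((hasDerivAt_const x (1:ℝ)).sub (hasDerivAt_id x)).rpow_const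
            (Or.inl (by linarith : (1:ℝ)-x ≠ 0))
        exact (((hA.const_mul (2*(r-1))).sub h1p).add h1m).hasDerivWithinAt
      · intro x hx
        rw [interior_Icc] at hx
        obtain ⟨hx0, hx1⟩ := hx
        have e1 : r - 1 - 1 = r - 2 := by ring
        rw [e1]
        have hIH := IH x ⟨hx0.le, hx1.le⟩
        have hX : (0:ℝ) ≤ (1+m*x^2) ^ ((r-2)/2) := Real.rpow_nonneg (hpos x).le _
        have hY : (0:ℝ) ≤ (1+m*x^2) ^ ((r-2)/2 - 1) := Real.rpow_nonneg (hpos x).le _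
        nlinarith [mul_nonneg (mul_nonneg (mul_nonneg hm0 (sq_nonneg x))
          (by linarith : (0:ℝ) ≤ r - 2)) hY]
    have hψ0 : ψ 0 = 0 := by
      simp [hψ]
    intro x hx
    have := hmono (left_mem_Icc.2 zero_le_one) hx hx.1
    rw [hψ0] at this
    simp only [hψ] at this
    linarith
  -- Step 2: integrate once more
  set φ : ℝ → ℝ := fun s => 2 * (1+m*s^2) ^ (r/2) - ((1+s) ^ r + (1-s) ^ r) with hφdef
  have hcont : ContinuousOn φ (Icc 0 1) :=
    ((continuous_const.mul (c3 _)).sub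
      ((c1 r (by linarith)).add (c2 r (by linarith)))).continuousOn
  have hmono : MonotoneOn φ (Icc 0 1) := by
    apply monotoneOn_of_hasDerivWithinAt_nonneg (convex_Icc 0 1) hcont
      (f' := fun s => 2 * (m*(2*s) * (r/2) * (1+m*s^2) ^ (r/2 - 1))
        - (1*r*(1+s) ^ (r-1) + (0-1)*r*(1-s) ^ (r-1)))
    · intro s hs
      rw [interior_Icc] at hs
      obtain ⟨hs0, hs1⟩ := hs
      have hB : HasDerivAt (fun s : ℝ => (1+m*s^2) ^ (r/2))
          (m*(2*s) * (r/2) * (1+m*s^2) ^ (r/2 - 1)) s :=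
        (hinner s).rpow_const (Or.inl (hpos s).ne')
      have h1p : HasDerivAt (fun s : ℝ => (1+s) ^ r) (1*r*(1+s) ^ (r-1)) s :=
        ((hasDerivAt_id s).const_add 1).rpow_const (Or.inl (by linarith : (1:ℝ)+s ≠ 0))
      have h1m : HasDerivAt (fun s : ℝ => (1-s) ^ r) ((0-1)*r*(1-s) ^ (r-1)) s :=
        ((hasDerivAt_const s (1:ℝ)).sub (hasDerivAt_id s)).rpow_const
          (Or.inl (by linarith : (1:ℝ)-s ≠ 0))
      exact ((hB.const_mul 2).sub (h1p.add h1m)).hasDerivWithinAt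
    · intro s hs
      rw [interior_Icc] at hs
      obtain ⟨hs0, hs1⟩ := hs
      have e1 : r/2 - 1 = (r-2)/2 := by ring
      rw [e1]
      have hc2 := claim2 s ⟨hs0.le, hs1.le⟩
      have hX : (0:ℝ) ≤ (1+m*s^2) ^ ((r-2)/2) := Real.rpow_nonneg (hpos s).le _
      nlinarith [mul_le_mul_of_nonneg_left hc2 (by linarith : (0:ℝ) ≤ r),
        mul_nonneg (mul_nonneg (by nlinarith : (0:ℝ) ≤ 2*r*s) hX)
          (by linarith : (0:ℝ) ≤ m - (r-1))]
  have hφ0 : φ 0 = 0 := by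
    simp [hφdef]; norm_num
  intro s hs
  have := hmono (left_mem_Icc.2 zero_le_one) hs hs.1
  rw [hφ0] at this
  simp only [hφdef] at this
  linarith

lemma bcl_core {m : ℝ} (hm : 1 ≤ m) :
    ∀ n : ℕ, ∀ r : ℝ, 0 ≤ r → r ≤ 2*n + 2 → r - 1 ≤ m →
      ∀ s ∈ Icc (0:ℝ) 1, (1+s) ^ r + (1-s) ^ r ≤ 2 * (1+m*s^2) ^ (r/2) := by
  intro n
  induction n with
  | zero =>
    intro r h0 h2 _ s hs
    exact bcl_base hm h0 (by norm_num at h2; linarith) hs.1 hs.2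
  | succ k ih =>
    intro r h0 h2 hrm s hs
    by_cases hcase : r ≤ 2
    · exact bcl_base hm h0 hcase hs.1 hs.2
    · push_neg at hcase
      exact bcl_step hm hcase.le hrm
        (ih (r-2) (by linarith) (by push_cast at h2 ⊢; linarith) (by linarith)) s hs

lemma bcl_nonneg {p : ℝ} (hp : 2 ≤ p) {a b : ℝ} (hb : 0 ≤ b) (hba : b ≤ a) :
    (a+b) ^ p + (a-b) ^ p ≤ 2 * (a^2 + (p-1)*b^2) ^ (p/2) := by
  have hp0 : (0:ℝ) < p := by linarith
  rcases eq_or_lt_of_le (hb.trans hba) with h | ha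
  · -- a = 0, hence b = 0
    have hb0 : b = 0 := le_antisymm (by linarith) hb
    rw [← h, hb0]
    norm_num
    rw [Real.zero_rpow hp0.ne', Real.zero_rpow (by positivity : p/2 ≠ 0)]
    norm_num
  · set t := b / a with ht
    have ht0 : 0 ≤ t := div_nonneg hb ha.le
    have ht1 : t ≤ 1 := by
      rw [ht, div_le_one ha]; exact hba
    have hm : (1:ℝ) ≤ p - 1 := by linarith
    have key := bcl_core hm ⌈p⌉₊ p hp0.le
      (by
        have := Nat.le_ceil p
        push_cast at this ⊢
        linarith)
      (le_refl _) t ⟨ht0, ht1⟩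
    -- multiply through by a^p = (a^2)^(p/2)
    have hb' : b = a * t := by
      rw [ht, mul_div_cancel₀ _ ha.ne']
    have e1 : (a+b) ^ p = a ^ p * (1+t) ^ p := by
      rw [← Real.mul_rpow ha.le (by linarith)]
      congr 1
      rw [hb']; ring
    have e2 : (a-b) ^ p = a ^ p * (1-t) ^ p := by
      rw [← Real.mul_rpow ha.le (by linarith)]
      congr 1
      rw [hb']; ring
    have e3 : (a^2 + (p-1)*b^2) ^ (p/2) = a ^ p * (1+(p-1)*t^2) ^ (p/2) := by
      have : a ^ p = (a^2) ^ (p/2) := by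
        rw [← Real.rpow_natCast a 2, ← Real.rpow_mul ha.le]
        congr 1; ring
      rw [this, ← Real.mul_rpow (by positivity) (by positivity)]
      congr 1
      rw [hb']; ring
    rw [e1, e2, e3]
    have hap : 0 ≤ a ^ p := Real.rpow_nonneg ha.le p
    calc a ^ p * (1+t) ^ p + a ^ p * (1-t) ^ p
        = a ^ p * ((1+t) ^ p + (1-t) ^ p) := by ring
      _ ≤ a ^ p * (2 * (1+(p-1)*t^2) ^ (p/2)) := by
          exact mul_le_mul_of_nonneg_left key hap
      _ = 2 * (a ^ p * (1+(p-1)*t^2) ^ (p/2)) := by ring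

lemma bcl_scalar {p : ℝ} (hp : 2 ≤ p) (a b : ℝ) :
    |a+b| ^ p + |a-b| ^ p ≤ 2 * (a^2 + (p-1)*b^2) ^ (p/2) := by
  -- reduce to |a|, |b|
  have habs : |a+b| ^ p + |a-b| ^ p = (|a|+|b|) ^ p + |(|a|-|b|)| ^ p := by
    rcases le_or_gt 0 a with ha | ha <;> rcases le_or_gt 0 b with hb | hb
    · rw [abs_of_nonneg ha, abs_of_nonneg hb, abs_of_nonneg (by linarith : 0 ≤ a + b)]
    · rw [abs_of_nonneg ha, abs_of_neg hb,
        show a + b = a - -b by ring, show a - b = a + -b by ring,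
        abs_of_nonneg (by linarith : 0 ≤ a + -b)]
      ring
    · rw [abs_of_neg ha, abs_of_nonneg hb,
        show a + b = -(-a - b) by ring, show a - b = -(-a + b) by ring, abs_neg, abs_neg,
        abs_of_nonneg (by linarith : 0 ≤ -a + b), abs_sub_comm]
      ring
    · rw [abs_of_neg ha, abs_of_neg hb,
        show a + b = -(-a + -b) by ring, show a - b = -(-a - -b) by ring, abs_neg, abs_neg,
        abs_of_nonneg (by linarith : 0 ≤ -a + -b)]
  have hsq : a^2 = |a|^2 := (sq_abs a).symm
  have hsqb : b^2 = |b|^2 := (sq_abs b).symm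
  rw [habs, hsq, hsqb]
  set A := |a| with hA
  set B := |b| with hB
  have hA0 : 0 ≤ A := abs_nonneg a
  have hB0 : 0 ≤ B := abs_nonneg b
  rcases le_or_gt B A with hle | hlt
  · rw [abs_of_nonneg (by linarith : 0 ≤ A - B)]
    exact bcl_nonneg hp hB0 hle
  · rw [abs_of_neg (by linarith : A - B < 0), show -(A-B) = B - A by ring,
      show A + B = B + A by ring]
    calc (B+A) ^ p + (B-A) ^ p ≤ 2 * (B^2 + (p-1)*A^2) ^ (p/2) :=
          bcl_nonneg hp hA0 hlt.le
      _ ≤ 2 * (A^2 + (p-1)*B^2) ^ (p/2) := by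
          have hprod : (0:ℝ) ≤ (p-2) * ((B-A)*(B+A)) :=
            mul_nonneg (by linarith) (mul_nonneg (by linarith) (by linarith))
          have : B^2 + (p-1)*A^2 ≤ A^2 + (p-1)*B^2 := by nlinarith [hprod]
          have h2 := Real.rpow_le_rpow
            (by nlinarith [sq_nonneg A, sq_nonneg B] : (0:ℝ) ≤ B^2 + (p-1)*A^2) this
            (by positivity : (0:ℝ) ≤ p/2)
          linarith

open ENNReal MeasureTheory in
/-- Pointwise version in `ℝ≥0∞`. -/
lemma bcl_pt {p : ℝ} (hp : 2 ≤ p) (x y : ℝ) :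
    (‖x+y‖₊ : ℝ≥0∞) ^ p + (‖x-y‖₊ : ℝ≥0∞) ^ p
      ≤ 2 * ((‖x‖₊ : ℝ≥0∞) ^ (2:ℝ) + ENNReal.ofReal (p-1) * (‖y‖₊ : ℝ≥0∞) ^ (2:ℝ)) ^ (p/2) := by
  have hp0 : (0:ℝ) ≤ p := by linarith
  have e : ∀ z : ℝ, (‖z‖₊ : ℝ≥0∞) = ENNReal.ofReal |z| := fun z =>
    Real.enorm_eq_ofReal_abs z
  rw [e, e, e, e]
  rw [ENNReal.ofReal_rpow_of_nonneg (abs_nonneg _) hp0,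
    ENNReal.ofReal_rpow_of_nonneg (abs_nonneg _) hp0,
    ENNReal.ofReal_rpow_of_nonneg (abs_nonneg _) (by norm_num : (0:ℝ) ≤ 2),
    ENNReal.ofReal_rpow_of_nonneg (abs_nonneg _) (by norm_num : (0:ℝ) ≤ 2),
    ← ENNReal.ofReal_add (by positivity) (by positivity),
    ← ENNReal.ofReal_mul (by linarith : (0:ℝ) ≤ p - 1),
    ← ENNReal.ofReal_add (by positivity)
      (mul_nonneg (by linarith : (0:ℝ) ≤ p - 1) (Real.rpow_nonneg (abs_nonneg y) 2)),
    ENNReal.ofReal_rpow_of_nonneg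
      (add_nonneg (Real.rpow_nonneg (abs_nonneg x) 2)
        (mul_nonneg (by linarith : (0:ℝ) ≤ p - 1) (Real.rpow_nonneg (abs_nonneg y) 2)))
      (by positivity : (0:ℝ) ≤ p/2),
    show ((2:ℝ≥0∞) = ENNReal.ofReal 2) by norm_num,
    ← ENNReal.ofReal_mul (by norm_num : (0:ℝ) ≤ 2)]
  apply ENNReal.ofReal_le_ofReal
  have h2 : ∀ z : ℝ, |z| ^ (2:ℝ) = z^2 := fun z => by
    rw [show ((2:ℝ) = ((2:ℕ):ℝ)) by norm_num, Real.rpow_natCast, sq_abs]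
  rw [h2, h2]
  exact bcl_scalar hp x y
end Aux

open scoped ENNReal

/-- **`L^p(μ)` is `(2, √(p−1))`-smooth for `2 ≤ p < ∞`.**
For all `f, g ∈ L^p(μ)` one has
`‖f+g‖² + ‖f−g‖² ≤ 2‖f‖² + 2(p−1)‖g‖²`. -/
theorem Lp_two_smooth
    {S : Type*} [MeasurableSpace S] (μ : Measure S)
    (p : ℝ) (hp : 2 ≤ p)
    (f g : Lp ℝ (ENNReal.ofReal p) μ) :
    ‖f + g‖ ^ 2 + ‖f - g‖ ^ 2 ≤ 2 * ‖f‖ ^ 2 + 2 * (p - 1) * ‖g‖ ^ 2 := by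

  have hp0 : (0:ℝ) < p := by linarith
  have hp2 : (1:ℝ) ≤ p/2 := by linarith
  have hq0 : ENNReal.ofReal p ≠ 0 := by
    simp only [ne_eq, ENNReal.ofReal_eq_zero, not_le]; linarith
  have hqt : ENNReal.ofReal p ≠ ⊤ := ENNReal.ofReal_ne_top
  have hqr : (ENNReal.ofReal p).toReal = p := ENNReal.toReal_ofReal hp0.le
  set c : ℝ≥0∞ := ENNReal.ofReal (p-1) with hc
  have hct : c ≠ ⊤ := ENNReal.ofReal_ne_top
  set J : Lp ℝ (ENNReal.ofReal p) μ → ℝ≥0∞ := fun h => ∫⁻ a, (‖h a‖₊ : ℝ≥0∞) ^ p ∂μ with hJ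
  -- norms in terms of lintegrals
  have hnorm : ∀ h : Lp ℝ (ENNReal.ofReal p) μ, ‖h‖ ^ 2 = ((J h) ^ (2/p)).toReal := by
    intro h
    rw [Lp.norm_def, eLpNorm_eq_lintegral_rpow_enorm_toReal hq0 hqt, hqr]
    change (J h ^ (1/p)).toReal ^ 2 = _
    rw [show ((J h ^ (1/p)).toReal ^ 2 = ((J h ^ (1/p)).toReal) ^ ((2:ℕ):ℝ)) by
      rw [Real.rpow_natCast]]
    rw [ENNReal.toReal_rpow, ← ENNReal.rpow_mul]
    congr 2
    push_cast
    field_simp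
  have hJfin : ∀ h : Lp ℝ (ENNReal.ofReal p) μ, J h ≠ ⊤ := by
    intro h
    have hlt := Lp.eLpNorm_lt_top h
    rw [eLpNorm_eq_lintegral_rpow_enorm_toReal hq0 hqt, hqr] at hlt
    change (∫⁻ a, (‖h a‖₊ : ℝ≥0∞) ^ p ∂μ) ^ (1/p) < ⊤ at hlt
    intro hcontra
    rw [hJ] at hcontra
    simp only at hcontra
    rw [hcontra, ENNReal.top_rpow_of_pos (by positivity : (0:ℝ) < 1/p)] at hlt
    exact (lt_irrefl _ hlt).elim
  have hmeas : ∀ h : Lp ℝ (ENNReal.ofReal p) μ, AEMeasurable (fun a => (‖h a‖₊ : ℝ≥0∞)) μ :=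
    fun h => (Lp.aestronglyMeasurable h).enorm
  have hmp : ∀ h : Lp ℝ (ENNReal.ofReal p) μ, AEMeasurable (fun a => (‖h a‖₊ : ℝ≥0∞) ^ p) μ := fun h =>
    ENNReal.continuous_rpow_const.measurable.comp_aemeasurable (hmeas h)
  -- the dominating function
  set H : S → ℝ≥0∞ := fun a => (‖f a‖₊ : ℝ≥0∞) ^ (2:ℝ) + c * (‖g a‖₊ : ℝ≥0∞) ^ (2:ℝ) with hH
  set K : ℝ≥0∞ := ∫⁻ a, H a ^ (p/2) ∂μ with hK
  -- step 1 : J (f+g) + J (f-g) ≤ 2 * K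
  have step1 : J (f+g) + J (f-g) ≤ 2 * K := by
    have hae : ∀ᵐ a ∂μ, (‖(f+g) a‖₊ : ℝ≥0∞) ^ p + (‖(f-g) a‖₊ : ℝ≥0∞) ^ p
        ≤ 2 * H a ^ (p/2) := by
      filter_upwards [Lp.coeFn_add f g, Lp.coeFn_sub f g] with a h1 h2
      simp only [Pi.add_apply] at h1
      simp only [Pi.sub_apply] at h2
      rw [h1, h2, hH]
      exact bcl_pt hp (f a) (g a)
    calc J (f+g) + J (f-g) = ∫⁻ a, ((‖(f+g) a‖₊ : ℝ≥0∞) ^ p + (‖(f-g) a‖₊ : ℝ≥0∞) ^ p) ∂μ :=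
          (lintegral_add_left' (hmp (f+g)) _).symm
      _ ≤ ∫⁻ a, 2 * H a ^ (p/2) ∂μ := lintegral_mono_ae hae
      _ = 2 * K := lintegral_const_mul' 2 _ (by norm_num)
  -- step 2 : Minkowski
  have step2 : K ^ (2/p) ≤ (J f) ^ (2/p) + c * (J g) ^ (2/p) := by
    have hF : AEMeasurable (fun a => (‖f a‖₊ : ℝ≥0∞) ^ (2:ℝ)) μ :=
      ENNReal.continuous_rpow_const.measurable.comp_aemeasurable (hmeas f)
    have hG : AEMeasurable (fun a => c * (‖g a‖₊ : ℝ≥0∞) ^ (2:ℝ)) μ :=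
      (ENNReal.continuous_rpow_const.measurable.comp_aemeasurable (hmeas g)).const_mul c
    have hmink := ENNReal.lintegral_Lp_add_le hF hG hp2
    have eF : ∀ a : S, ((‖f a‖₊ : ℝ≥0∞) ^ (2:ℝ)) ^ (p/2) = (‖f a‖₊ : ℝ≥0∞) ^ p := by
      intro a
      rw [← ENNReal.rpow_mul]
      congr 1; ring
    have eG : ∀ a : S, (c * (‖g a‖₊ : ℝ≥0∞) ^ (2:ℝ)) ^ (p/2)
        = c ^ (p/2) * (‖g a‖₊ : ℝ≥0∞) ^ p := by
      intro a
      rw [ENNReal.mul_rpow_of_nonneg _ _ (by positivity : (0:ℝ) ≤ p/2), ← ENNReal.rpow_mul]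
      congr 2; ring
    simp only [Pi.add_apply, eF, eG] at hmink
    rw [lintegral_const_mul' (c ^ (p/2)) _
        (ENNReal.rpow_ne_top_of_nonneg (by positivity) hct)] at hmink
    rw [one_div_div] at hmink
    have ecg : (c ^ (p/2) * J g) ^ (2/p) = c * (J g) ^ (2/p) := by
      rw [ENNReal.mul_rpow_of_nonneg _ _ (by positivity : (0:ℝ) ≤ 2/p), ← ENNReal.rpow_mul,
        show (p/2) * (2/p) = 1 by field_simp, ENNReal.rpow_one]
    rw [ecg] at hmink
    exact hmink
  -- step 3 : concavity of x ↦ x^(2/p)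
  set X := J (f+g) with hX
  set Y := J (f-g) with hY
  have step3 : X ^ (2/p) + Y ^ (2/p) ≤ 2 ^ (1 - 2/p) * (X + Y) ^ (2/p) := by
    have h1 := ENNReal.rpow_add_le_mul_rpow_add_rpow (X ^ (2/p)) (Y ^ (2/p)) hp2
    have e1 : ∀ z : ℝ≥0∞, (z ^ (2/p)) ^ (p/2) = z := by
      intro z
      rw [← ENNReal.rpow_mul, show (2/p) * (p/2) = 1 by field_simp, ENNReal.rpow_one]
    rw [e1, e1] at h1
    have e2 : ∀ z : ℝ≥0∞, (z ^ (p/2)) ^ (2/p) = z := by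
      intro z
      rw [← ENNReal.rpow_mul, show (p/2) * (2/p) = 1 by field_simp, ENNReal.rpow_one]
    have h2 := ENNReal.rpow_le_rpow h1 (by positivity : (0:ℝ) ≤ 2/p)
    rw [e2] at h2
    calc X ^ (2/p) + Y ^ (2/p) ≤ (2 ^ (p/2 - 1) * (X + Y)) ^ (2/p) := h2
      _ = 2 ^ (1 - 2/p) * (X + Y) ^ (2/p) := by
          rw [ENNReal.mul_rpow_of_nonneg _ _ (by positivity : (0:ℝ) ≤ 2/p),
            ← ENNReal.rpow_mul]
          congr 2
          field_simp
  -- combine in ℝ≥0∞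
  have main : X ^ (2/p) + Y ^ (2/p) ≤ 2 * ((J f) ^ (2/p) + c * (J g) ^ (2/p)) := by
    calc X ^ (2/p) + Y ^ (2/p) ≤ 2 ^ (1 - 2/p) * (X + Y) ^ (2/p) := step3
      _ ≤ 2 ^ (1 - 2/p) * (2 * K) ^ (2/p) := by
          exact mul_le_mul_right (ENNReal.rpow_le_rpow step1 (by positivity)) _
      _ = 2 ^ (1 - 2/p) * (2 ^ (2/p) * K ^ (2/p)) := by
          rw [ENNReal.mul_rpow_of_nonneg _ _ (by positivity : (0:ℝ) ≤ 2/p)]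
      _ = 2 * K ^ (2/p) := by
          rw [← mul_assoc, ← ENNReal.rpow_add _ _ (by norm_num) (by norm_num),
            show (1 - 2/p) + 2/p = 1 by ring, ENNReal.rpow_one]
      _ ≤ 2 * ((J f) ^ (2/p) + c * (J g) ^ (2/p)) := mul_le_mul_right step2 _
  -- pass to reals
  have hfin : ∀ h : Lp ℝ (ENNReal.ofReal p) μ, (J h) ^ (2/p) ≠ ⊤ := fun h =>
    ENNReal.rpow_ne_top_of_nonneg (by positivity) (hJfin h)
  have hRfin : 2 * ((J f) ^ (2/p) + c * (J g) ^ (2/p)) ≠ ⊤ := by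
    apply ENNReal.mul_ne_top (by norm_num)
    exact ENNReal.add_ne_top.2 ⟨hfin f, ENNReal.mul_ne_top hct (hfin g)⟩
  have hmono := ENNReal.toReal_mono hRfin main
  rw [ENNReal.toReal_add (hfin (f+g)) (hfin (f-g)), ENNReal.toReal_mul,
    ENNReal.toReal_add (hfin f) (ENNReal.mul_ne_top hct (hfin g)), ENNReal.toReal_mul] at hmono
  rw [hnorm (f+g), hnorm (f-g), hnorm f, hnorm g]
  have hc' : c.toReal = p - 1 := ENNReal.toReal_ofReal (by linarith)
  rw [hc'] at hmono
  have h2' : (2:ℝ≥0∞).toReal = 2 := by norm_num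
  rw [h2'] at hmono
  linarith
end

section
/- Let (S,𝓐,μ) be a measure space, let 2 ≤ p < ∞, and let X be a (2,D)-smooth Banach space. Then the Bochner space L^p(μ;X) is (2, D·√(p−1))-smooth; that is, for all f, g ∈ L^p(μ;X) one has ‖f+g‖_{L^p(μ;X)}² + ‖f−g‖_{L^p(μ;X)}² ≤ 2‖f‖_{L^p(μ;X)}² + 2D²(p−1)‖g‖_{L^p(μ;X)}². -/
open Real Set

/-- Two point Jensen for convex rpow. -/
lemma jensen2 {x y r : ℝ} (hx : 0 ≤ x) (hy : 0 ≤ y) (hr : 1 ≤ r) :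
    ((x + y)/2) ^ r ≤ (x ^ r + y ^ r)/2 := by
  have h := NNReal.rpow_arith_mean_le_arith_mean2_rpow (1/2) (1/2)
      ⟨x, hx⟩ ⟨y, hy⟩ (add_halves 1) hr
  have h2 := NNReal.coe_le_coe.2 h
  push_cast [NNReal.coe_rpow] at h2
  calc ((x+y)/2) ^ r = (1/2*x + 1/2*y) ^ r := by ring_nf
    _ ≤ 1/2*x^r + 1/2*y^r := h2
    _ = (x^r + y^r)/2 := by ring

/-- concave direction two-point: `(1+t)^q + (1-t)^q ≤ 2(1+t²)^{q/2}` for `0 < q ≤ 2`. -/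
lemma concave2_s4 {q t : ℝ} (hq0 : 0 < q) (hq2 : q ≤ 2) (ht0 : 0 ≤ t) (ht1 : t ≤ 1) :
    (1+t)^q + (1-t)^q ≤ 2*(1+t^2)^(q/2) := by
  have h1t : (0:ℝ) ≤ 1 + t := by linarith
  have h2t : (0:ℝ) ≤ 1 - t := by linarith
  have hx : (0:ℝ) ≤ (1+t)^q := rpow_nonneg h1t q
  have hy : (0:ℝ) ≤ (1-t)^q := rpow_nonneg h2t q
  have hr : 1 ≤ 2/q := (one_le_div hq0).2 hq2
  have hxr : ((1+t)^q)^(2/q) = (1+t)^2 := by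
    rw [← rpow_natCast (1+t) 2, ← rpow_mul h1t]
    congr 1
    field_simp
    norm_num
  have hyr : ((1-t)^q)^(2/q) = (1-t)^2 := by
    rw [← rpow_natCast (1-t) 2, ← rpow_mul h2t]
    congr 1
    field_simp
    norm_num
  have key := jensen2 hx hy hr
  rw [hxr, hyr] at key
  have key2 : (((1+t)^q + (1-t)^q)/2) ^ (2/q) ≤ 1 + t^2 := by
    calc (((1+t)^q + (1-t)^q)/2) ^ (2/q) ≤ ((1+t)^2 + (1-t)^2)/2 := key
      _ = 1 + t^2 := by ring
  have key3 := rpow_le_rpow (rpow_nonneg (by positivity) _) key2 (by positivity : (0:ℝ) ≤ q/2)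
  rw [← rpow_mul (by positivity)] at key3
  have : 2/q * (q/2) = 1 := by field_simp
  rw [this, rpow_one] at key3
  linarith

/-- The auxiliary inequality `(***)`. -/
def MyStar (p : ℝ) : Prop :=
  ∀ t ∈ Icc (0:ℝ) 1,
    (1+t)^(p-2) + (1-t)^(p-2) ≤ 2*(1+(p-1)*t^2)^((p-4)/2)*(1+(p-1)^2*t^2)

/-- The main two-point inequality as a predicate. -/
def TwoPt (p : ℝ) : Prop :=
  ∀ t ∈ Icc (0:ℝ) 1, (1+t)^p + (1-t)^p ≤ 2*(1+(p-1)*t^2)^(p/2)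

lemma star_base {p : ℝ} (hp2 : 2 ≤ p) (hp4 : p ≤ 4) : MyStar p := by
  intro t ht
  obtain ⟨ht0, ht1⟩ := ht
  have hbpos : (0:ℝ) < 1 + (p-1)*t^2 := by nlinarith
  have hbpos2 : (0:ℝ) < 1 + (p-1)^2*t^2 := by nlinarith
  have hble : 1 + (p-1)*t^2 ≤ 1 + (p-1)^2*t^2 := by
    nlinarith [mul_nonneg (mul_nonneg (show (0:ℝ) ≤ p-1 by linarith)
      (show (0:ℝ) ≤ p-2 by linarith)) (sq_nonneg t)]
  rcases eq_or_lt_of_le hp2 with rfl | hp2'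
  · -- p = 2
    norm_num
    rw [rpow_neg_one, mul_assoc, inv_mul_cancel₀
      (ne_of_gt (by positivity : (0:ℝ) < 1 + t^2)), mul_one]
  · have hq0 : (0:ℝ) < p - 2 := by linarith
    have hq2 : p - 2 ≤ 2 := by linarith
    have h1 := concave2_s4 hq0 hq2 ht0 ht1
    have h2 : (1+t^2:ℝ)^((p-2)/2) ≤ (1+(p-1)^2*t^2)^((p-2)/2) := by
      apply rpow_le_rpow (by positivity) (by nlinarith) (by linarith)
    have h3 : (1+(p-1)^2*t^2:ℝ)^((p-2)/2)
        = (1+(p-1)^2*t^2)^((p-4)/2) * (1+(p-1)^2*t^2) := by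
      rw [show (p-2)/2 = (p-4)/2 + 1 by ring, rpow_add_one (ne_of_gt hbpos2)]
    have h4 : (1+(p-1)^2*t^2:ℝ)^((p-4)/2) ≤ (1+(p-1)*t^2)^((p-4)/2) :=
      rpow_le_rpow_of_nonpos hbpos hble (by linarith)
    calc (1+t)^(p-2) + (1-t)^(p-2) ≤ 2*(1+t^2)^((p-2)/2) := h1
      _ ≤ 2*(1+(p-1)^2*t^2)^((p-2)/2) := by linarith
      _ = 2*((1+(p-1)^2*t^2)^((p-4)/2) * (1+(p-1)^2*t^2)) := by rw [h3]
      _ ≤ 2*((1+(p-1)*t^2)^((p-4)/2) * (1+(p-1)^2*t^2)) := by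
          have := mul_le_mul_of_nonneg_right h4 (le_of_lt hbpos2)
          linarith
      _ = 2*(1+(p-1)*t^2)^((p-4)/2)*(1+(p-1)^2*t^2) := by ring

lemma star_rec {p : ℝ} (hp4 : 4 < p) (ih : TwoPt (p-2)) : MyStar p := by
  intro t ht
  obtain ⟨ht0, ht1⟩ := ht
  have hbpos : (0:ℝ) < 1 + (p-1)*t^2 := by nlinarith
  have h1 := ih t ⟨ht0, ht1⟩
  have h2 : (1+(p-2-1)*t^2:ℝ)^((p-2)/2) ≤ (1+(p-1)*t^2)^((p-2)/2) := by
    apply rpow_le_rpow (by nlinarith) (by nlinarith) (by linarith)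
  have h3 : (1+(p-1)*t^2:ℝ)^((p-2)/2)
      = (1+(p-1)*t^2)^((p-4)/2) * (1+(p-1)*t^2) := by
    rw [show (p-2)/2 = (p-4)/2 + 1 by ring, rpow_add_one (ne_of_gt hbpos)]
  have h5 : (0:ℝ) ≤ (1+(p-1)*t^2)^((p-4)/2) := rpow_nonneg (le_of_lt hbpos) _
  have h4 : (1+(p-1)*t^2:ℝ)^((p-4)/2) * (1+(p-1)*t^2)
      ≤ (1+(p-1)*t^2)^((p-4)/2) * (1+(p-1)^2*t^2) := by
    apply mul_le_mul_of_nonneg_left _ h5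
    nlinarith [mul_nonneg (mul_nonneg (show (0:ℝ) ≤ p-1 by linarith)
      (show (0:ℝ) ≤ p-2 by linarith)) (sq_nonneg t)]
  calc (1+t)^(p-2) + (1-t)^(p-2) ≤ 2*(1+(p-2-1)*t^2)^((p-2)/2) := h1
    _ ≤ 2*(1+(p-1)*t^2)^((p-2)/2) := by linarith
    _ = 2*((1+(p-1)*t^2)^((p-4)/2) * (1+(p-1)*t^2)) := by rw [h3]
    _ ≤ 2*((1+(p-1)*t^2)^((p-4)/2) * (1+(p-1)^2*t^2)) := by linarith
    _ = 2*(1+(p-1)*t^2)^((p-4)/2)*(1+(p-1)^2*t^2) := by ring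

lemma step {p : ℝ} (hp : 2 ≤ p) (hstar : MyStar p) : TwoPt p := by
  have hp1 : (0:ℝ) ≤ p - 1 := by linarith
  have hp2' : (0:ℝ) ≤ p - 2 := by linarith
  -- inner function nonneg
  have key1 : ∀ t ∈ Icc (0:ℝ) 1,
      0 ≤ 2*(p-1)*t*(1+(p-1)*t^2)^((p-2)/2) - (1+t)^(p-1) + (1-t)^(p-1) := by
    have contb : Continuous fun t:ℝ => 1+(p-1)*t^2 :=
      continuous_const.add (continuous_const.mul (continuous_pow 2))
    have cont : ContinuousOn
        (fun t:ℝ => 2*(p-1)*t*(1+(p-1)*t^2)^((p-2)/2) - (1+t)^(p-1) + (1-t)^(p-1))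
        (Icc 0 1) := by
      apply Continuous.continuousOn
      exact (((continuous_const.mul continuous_id).mul
          (contb.rpow_const (fun x => Or.inr (by linarith)))).sub
          ((continuous_const.add continuous_id).rpow_const (fun x => Or.inr (by linarith)))).add
          ((continuous_const.sub continuous_id).rpow_const (fun x => Or.inr (by linarith)))
    have mono := monotoneOn_of_hasDerivWithinAt_nonneg (convex_Icc (0:ℝ) 1) cont
      (f' := fun t => 2*(p-1)*(1+(p-1)*t^2)^((p-4)/2)*(1+(p-1)^2*t^2)
        - (p-1)*(1+t)^(p-2) - (p-1)*(1-t)^(p-2))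
      (by
        rw [interior_Icc]
        intro t ht
        have hw : (0:ℝ) < 1+(p-1)*t^2 := by nlinarith [sq_nonneg t, ht.1, ht.2]
        have hψ : HasDerivAt (fun t:ℝ => (1+(p-1)*t^2)^((p-2)/2))
            (((p-1)*(2*t^1)) * ((p-2)/2) * (1+(p-1)*t^2)^((p-2)/2-1)) t :=
          (((hasDerivAt_pow 2 t).const_mul (p-1)).const_add 1).rpow_const
            (Or.inl (ne_of_gt hw))
        have hmul : HasDerivAt (fun t:ℝ => 2*(p-1)*t*(1+(p-1)*t^2)^((p-2)/2))
            ((2*(p-1))*1*((1+(p-1)*t^2)^((p-2)/2)) + (2*(p-1)*t)*(((p-1)*(2*t^1)) * ((p-2)/2) * (1+(p-1)*t^2)^((p-2)/2-1))) t :=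
          ((hasDerivAt_id t).const_mul (2*(p-1))).mul hψ
        have hplus : HasDerivAt (fun t:ℝ => (1+t)^(p-1))
            (1 * (p-1) * (1+t)^(p-1-1)) t :=
          ((hasDerivAt_id t).const_add 1).rpow_const (Or.inl (fun h => by simp only [id_eq] at h; linarith [ht.1]))
        have hminus : HasDerivAt (fun t:ℝ => (1-t)^(p-1))
            ((-1) * (p-1) * (1-t)^(p-1-1)) t :=
          ((hasDerivAt_id t).const_sub 1).rpow_const (Or.inl (fun h => by simp only [id_eq] at h; linarith [ht.2]))
        have H := (hmul.sub hplus).add hminus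
        have heq : ((2*(p-1))*1*((1+(p-1)*t^2)^((p-2)/2)) + (2*(p-1)*t)*(((p-1)*(2*t^1)) * ((p-2)/2) * (1+(p-1)*t^2)^((p-2)/2-1))
            - 1 * (p-1) * (1+t)^(p-1-1)) + (-1) * (p-1) * (1-t)^(p-1-1)
            = 2*(p-1)*(1+(p-1)*t^2)^((p-4)/2)*(1+(p-1)^2*t^2)
              - (p-1)*(1+t)^(p-2) - (p-1)*(1-t)^(p-2) := by
          rw [show (p-2)/2 - 1 = (p-4)/2 by ring, show p-1-1 = p-2 by ring,
            show (p-2)/2 = (p-4)/2 + 1 by ring, rpow_add_one (ne_of_gt hw)]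
          ring
        rw [heq] at H
        exact H.hasDerivWithinAt)
      (by
        rw [interior_Icc]
        intro t ht
        have hw : (0:ℝ) < 1+(p-1)*t^2 := by nlinarith [sq_nonneg t, ht.1, ht.2]
        have hs := hstar t ⟨le_of_lt ht.1, le_of_lt ht.2⟩
        have := mul_le_mul_of_nonneg_left hs hp1
        nlinarith [this])
    intro t ht
    have h0 : (0:ℝ) ∈ Icc (0:ℝ) 1 := by constructor <;> norm_num
    have := mono h0 ht ht.1
    simp only [mul_zero, zero_mul, ne_eq, OfNat.ofNat_ne_zero, not_false_eq_true,
      zero_pow, add_zero, sub_zero, one_rpow] at this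
    linarith [this]
  -- outer function
  have key2 : ∀ t ∈ Icc (0:ℝ) 1,
      0 ≤ 2*(1+(p-1)*t^2)^(p/2) - (1+t)^p - (1-t)^p := by
    have contb : Continuous fun t:ℝ => 1+(p-1)*t^2 :=
      continuous_const.add (continuous_const.mul (continuous_pow 2))
    have cont : ContinuousOn
        (fun t:ℝ => 2*(1+(p-1)*t^2)^(p/2) - (1+t)^p - (1-t)^p) (Icc 0 1) := by
      apply Continuous.continuousOn
      exact ((continuous_const.mul
          (contb.rpow_const (fun x => Or.inr (by linarith)))).sub
          ((continuous_const.add continuous_id).rpow_const (fun x => Or.inr (by linarith)))).sub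
          ((continuous_const.sub continuous_id).rpow_const (fun x => Or.inr (by linarith)))
    have mono := monotoneOn_of_hasDerivWithinAt_nonneg (convex_Icc (0:ℝ) 1) cont
      (f' := fun t => p * (2*(p-1)*t*(1+(p-1)*t^2)^((p-2)/2) - (1+t)^(p-1) + (1-t)^(p-1)))
      (by
        rw [interior_Icc]
        intro t ht
        have hw : (0:ℝ) < 1+(p-1)*t^2 := by nlinarith [sq_nonneg t, ht.1, ht.2]
        have hψ : HasDerivAt (fun t:ℝ => (1+(p-1)*t^2)^(p/2))
            (((p-1)*(2*t^1)) * (p/2) * (1+(p-1)*t^2)^(p/2-1)) t :=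
          (((hasDerivAt_pow 2 t).const_mul (p-1)).const_add 1).rpow_const
            (Or.inl (ne_of_gt hw))
        have hplus : HasDerivAt (fun t:ℝ => (1+t)^p)
            (1 * p * (1+t)^(p-1)) t :=
          ((hasDerivAt_id t).const_add 1).rpow_const (Or.inl (fun h => by simp only [id_eq] at h; linarith [ht.1]))
        have hminus : HasDerivAt (fun t:ℝ => (1-t)^p)
            ((-1) * p * (1-t)^(p-1)) t :=
          ((hasDerivAt_id t).const_sub 1).rpow_const (Or.inl (fun h => by simp only [id_eq] at h; linarith [ht.2]))
        have H := ((hψ.const_mul 2).sub hplus).sub hminus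
        have heq : (2 * (((p-1)*(2*t^1)) * (p/2) * (1+(p-1)*t^2)^(p/2-1))
            - 1 * p * (1+t)^(p-1)) - (-1) * p * (1-t)^(p-1)
            = p * (2*(p-1)*t*(1+(p-1)*t^2)^((p-2)/2) - (1+t)^(p-1) + (1-t)^(p-1)) := by
          rw [show p/2 - 1 = (p-2)/2 by ring]
          ring
        rw [heq] at H
        exact H.hasDerivWithinAt)
      (by
        rw [interior_Icc]
        intro t ht
        have := key1 t ⟨le_of_lt ht.1, le_of_lt ht.2⟩
        exact mul_nonneg (by linarith) this)
    intro t ht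
    have h0 : (0:ℝ) ∈ Icc (0:ℝ) 1 := by constructor <;> norm_num
    have := mono h0 ht ht.1
    simp only [mul_zero, zero_mul, ne_eq, OfNat.ofNat_ne_zero, not_false_eq_true,
      zero_pow, add_zero, sub_zero, one_rpow] at this
    linarith [this]
  intro t ht
  have := key2 t ht
  linarith

lemma twoPt_aux : ∀ n : ℕ, ∀ p : ℝ, 2 ≤ p → p ≤ 2 + 2*n → TwoPt p := by
  intro n
  induction n with
  | zero =>
    intro p hp2 hp4
    exact step hp2 (star_base hp2 (by norm_num at hp4; linarith))
  | succ n ih =>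
    intro p hp2 hpn
    by_cases hp4 : p ≤ 4
    · exact step hp2 (star_base hp2 hp4)
    · push_neg at hp4
      have ihp : TwoPt (p-2) := ih (p-2) (by linarith) (by push_cast at hpn ⊢; linarith)
      exact step hp2 (star_rec hp4 ihp)

lemma twoPt {p : ℝ} (hp : 2 ≤ p) : TwoPt p := by
  obtain ⟨n, hn⟩ := exists_nat_ge p
  exact twoPt_aux n p hp (by push_cast; linarith)

/-- Homogeneous scalar two-point inequality. -/
lemma scalar_hom {p : ℝ} (hp : 2 ≤ p) {a b : ℝ} (ha : 0 ≤ a) (hb : 0 ≤ b) :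
    a^p + b^p ≤ 2 * (((a+b)/2)^2 + (p-1)*((a-b)/2)^2)^(p/2) := by
  have hp0 : (0:ℝ) < p := by linarith
  -- reduce to the case b ≤ a by symmetry
  wlog hba : b ≤ a with H
  · push_neg at hba
    have := H hp hb ha hp0 (le_of_lt hba)
    calc a^p + b^p = b^p + a^p := by ring
      _ ≤ 2 * (((b+a)/2)^2 + (p-1)*((b-a)/2)^2)^(p/2) := this
      _ = 2 * (((a+b)/2)^2 + (p-1)*((a-b)/2)^2)^(p/2) := by ring_nf
  set m := (a+b)/2 with hm
  set e := (a-b)/2 with he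
  have hm0 : 0 ≤ m := by simp [hm]; linarith
  have he0 : 0 ≤ e := by simp [he]; linarith
  have hem : e ≤ m := by simp [hm, he]; linarith
  rcases eq_or_lt_of_le hm0 with hmz | hmpos
  · -- m = 0 : a = b = 0
    have haz : a = 0 := by simp [hm] at hmz; linarith
    have hbz : b = 0 := by simp [hm] at hmz; linarith
    subst haz; subst hbz
    rw [Real.zero_rpow (by linarith : p ≠ 0)]
    norm_num
    positivity
  · set t := e/m with ht
    have ht0 : 0 ≤ t := div_nonneg he0 (le_of_lt hmpos)
    have ht1 : t ≤ 1 := (div_le_one hmpos).2 hem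
    have key := twoPt hp t ⟨ht0, ht1⟩
    have hmt : m * t = e := by rw [ht]; field_simp
    have ha' : a = m*(1+t) := by
      rw [mul_add, mul_one, hmt]
      show a = (a+b)/2 + (a-b)/2
      ring
    have hb' : b = m*(1-t) := by
      rw [mul_sub, mul_one, hmt]
      show b = (a+b)/2 - (a-b)/2
      ring
    have h1t : (0:ℝ) ≤ 1+t := by linarith
    have h2t : (0:ℝ) ≤ 1-t := by linarith
    rw [ha', hb', Real.mul_rpow (le_of_lt hmpos) h1t, Real.mul_rpow (le_of_lt hmpos) h2t]
    have hmt' : m * t = e := by rw [ht]; field_simp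
    have hrw : m^2 + (p-1)*e^2 = m^2 * (1+(p-1)*t^2) := by
      calc m^2 + (p-1)*e^2 = m^2 + (p-1)*(m*t)^2 := by rw [hmt']
        _ = m^2 * (1+(p-1)*t^2) := by ring
    have hbase : (0:ℝ) ≤ 1+(p-1)*t^2 := by nlinarith
    calc m^p*(1+t)^p + m^p*(1-t)^p = m^p * ((1+t)^p + (1-t)^p) := by ring
      _ ≤ m^p * (2*(1+(p-1)*t^2)^(p/2)) := by
          apply mul_le_mul_of_nonneg_left key (Real.rpow_nonneg (le_of_lt hmpos) p)
      _ = 2 * ((m^2)^(p/2) * (1+(p-1)*t^2)^(p/2)) := by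
          rw [← Real.rpow_natCast m 2, ← Real.rpow_mul (le_of_lt hmpos),
            show ((2:ℕ):ℝ) * (p/2) = p by push_cast; ring]
          ring
      _ = 2 * (m^2 * (1+(p-1)*t^2))^(p/2) := by
          rw [Real.mul_rpow (by positivity) hbase]
      _ = 2 * (m^2 + (p-1)*e^2)^(p/2) := by rw [hrw]

/-- Pointwise vector inequality in a `(2,D)`-smooth space. -/
lemma vec_pointwise {X : Type*} [NormedAddCommGroup X] {p D : ℝ} (hp : 2 ≤ p) (hD1 : 1 ≤ D)
    (hsmooth : ∀ x y : X, ‖x + y‖ ^ 2 + ‖x - y‖ ^ 2 ≤ 2 * ‖x‖ ^ 2 + 2 * D ^ 2 * ‖y‖ ^ 2)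
    (x y : X) :
    ‖x + y‖ ^ p + ‖x - y‖ ^ p ≤ 2 * (‖x‖^2 + (p-1)*D^2*‖y‖^2) ^ (p/2) := by
  have hs := hsmooth x y
  have habs : |‖x + y‖ - ‖x - y‖| ≤ 2 * ‖y‖ := by
    have h := abs_norm_sub_norm_le (x + y) (x - y)
    have he : x + y - (x - y) = y + y := by abel
    rw [he] at h
    calc |‖x+y‖ - ‖x-y‖| ≤ ‖y + y‖ := h
      _ ≤ ‖y‖ + ‖y‖ := norm_add_le y y
      _ = 2*‖y‖ := by ring
  have h1 := abs_le.1 habs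
  have key := scalar_hom hp (norm_nonneg (x+y)) (norm_nonneg (x-y))
  have he2 : ((‖x+y‖-‖x-y‖)/2)^2 ≤ ‖y‖^2 := by
    nlinarith [mul_nonneg (show (0:ℝ) ≤ 2*‖y‖ - (‖x+y‖ - ‖x-y‖) by linarith [h1.2])
      (show (0:ℝ) ≤ 2*‖y‖ + (‖x+y‖ - ‖x-y‖) by linarith [h1.1])]
  have hD2 : 1 ≤ D^2 := by nlinarith
  have hle : ((‖x+y‖+‖x-y‖)/2)^2 + (p-1)*((‖x+y‖-‖x-y‖)/2)^2
      ≤ ‖x‖^2 + (p-1)*D^2*‖y‖^2 := by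
    nlinarith [mul_le_mul_of_nonneg_left he2 (show (0:ℝ) ≤ p-2 by linarith),
      mul_nonneg (mul_nonneg (show (0:ℝ) ≤ p-2 by linarith)
        (show (0:ℝ) ≤ D^2-1 by linarith)) (sq_nonneg ‖y‖)]
  calc ‖x+y‖^p + ‖x-y‖^p
      ≤ 2 * (((‖x+y‖+‖x-y‖)/2)^2 + (p-1)*((‖x+y‖-‖x-y‖)/2)^2)^(p/2) := key
    _ ≤ 2 * (‖x‖^2 + (p-1)*D^2*‖y‖^2)^(p/2) := by
        have hb0 : (0:ℝ) ≤ ((‖x+y‖+‖x-y‖)/2)^2 + (p-1)*((‖x+y‖-‖x-y‖)/2)^2 := by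
          nlinarith [sq_nonneg ((‖x+y‖+‖x-y‖)/2),
            mul_nonneg (show (0:ℝ) ≤ p-1 by linarith) (sq_nonneg ((‖x+y‖-‖x-y‖)/2))]
        have := Real.rpow_le_rpow hb0 hle (by linarith : (0:ℝ) ≤ p/2)
        linarith

open MeasureTheory
open scoped ENNReal NNReal

/-- **`L^p(μ;X)` is `(2, D√(p−1))`-smooth when `X` is `(2,D)`-smooth and `2 ≤ p < ∞`.**
For all `f, g` in the Bochner space `L^p(μ;X)` one has
`‖f+g‖² + ‖f−g‖² ≤ 2‖f‖² + 2D²(p−1)‖g‖²`. -/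
theorem bochner_Lp_two_smooth
    {S : Type*} [MeasurableSpace S] (μ : Measure S)
    {X : Type*} [NormedAddCommGroup X] [NormedSpace ℝ X] [CompleteSpace X]
    (p D : ℝ) (hp : 2 ≤ p) (hD : 0 ≤ D)
    (hsmooth : ∀ x y : X,
      ‖x + y‖ ^ 2 + ‖x - y‖ ^ 2 ≤ 2 * ‖x‖ ^ 2 + 2 * D ^ 2 * ‖y‖ ^ 2)
    (f g : Lp X (ENNReal.ofReal p) μ) :
    ‖f + g‖ ^ 2 + ‖f - g‖ ^ 2 ≤ 2 * ‖f‖ ^ 2 + 2 * D ^ 2 * (p - 1) * ‖g‖ ^ 2 := by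
  have hp0 : (0:ℝ) < p := by linarith
  haveI : Fact (1 ≤ ENNReal.ofReal p) :=
    ⟨by rw [show (1:ℝ≥0∞) = ENNReal.ofReal 1 by simp]; exact ENNReal.ofReal_le_ofReal (by linarith)⟩
  by_cases hD1 : 1 ≤ D
  swap
  · -- degenerate case : X is trivial
    push_neg at hD1
    have hX : ∀ y : X, y = 0 := by
      intro y
      by_contra hy
      have h := hsmooth 0 y
      simp only [zero_add, zero_sub, norm_neg, norm_zero] at h
      have hy' : 0 < ‖y‖ := norm_pos_iff.2 hy
      nlinarith [mul_pos (show (0:ℝ) < 1-D by linarith) (show (0:ℝ) < 1+D by linarith),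
        mul_pos hy' hy']
    have hz : ∀ h : Lp X (ENNReal.ofReal p) μ, h = 0 := by
      intro h
      refine Lp.ext (μ := μ) ?_
      filter_upwards [Lp.coeFn_zero X (ENNReal.ofReal p) μ] with a ha
      rw [ha]
      exact hX (h a)
    rw [hz f, hz g]
    norm_num
  -- main case
  have hq0 : (ENNReal.ofReal p) ≠ 0 := by
    simp only [ne_eq, ENNReal.ofReal_eq_zero, not_le]; linarith
  have hqt : (ENNReal.ofReal p) ≠ ∞ := ENNReal.ofReal_ne_top
  have hqr : (ENNReal.ofReal p).toReal = p := ENNReal.toReal_ofReal (le_of_lt hp0)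
  revert f g
  set q := ENNReal.ofReal p with hqdef
  intro f g
  -- integral functional
  set I : Lp X q μ → ℝ≥0∞ := fun h => ∫⁻ a, (‖h a‖₊ : ℝ≥0∞) ^ p ∂μ with hIdef
  have hIfin : ∀ h : Lp X q μ, I h ≠ ∞ := by
    intro h
    have h1 := Lp.eLpNorm_lt_top h
    have h2 := lintegral_rpow_enorm_lt_top_of_eLpNorm_lt_top hq0 hqt h1
    rw [hqr] at h2
    exact h2.ne
  have hnormI : ∀ h : Lp X q μ, ‖h‖ ^ p = (I h).toReal := by
    intro h
    rw [Lp.norm_def, eLpNorm_eq_lintegral_rpow_enorm_toReal hq0 hqt, hqr,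
      ← ENNReal.toReal_rpow, ← Real.rpow_mul ENNReal.toReal_nonneg, one_div,
      inv_mul_cancel₀ (ne_of_gt hp0), Real.rpow_one]
    rfl
  have hnorm2 : ∀ h : Lp X q μ, ‖h‖ ^ (2:ℕ) = ((I h) ^ ((2:ℝ)/p)).toReal := by
    intro h
    rw [Lp.norm_def, eLpNorm_eq_lintegral_rpow_enorm_toReal hq0 hqt, hqr, ← ENNReal.toReal_pow,
      ← ENNReal.rpow_natCast (_ ^ (1/p)) 2, ← ENNReal.rpow_mul]
    simp only [hIdef]
    rw [show 1/p * ((2:ℕ):ℝ) = 2/p by push_cast; ring]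
    rfl
  -- constant
  set K : ℝ≥0∞ := ENNReal.ofReal ((p-1)*D^2) with hKdef
  have hKfin : K ≠ ∞ := ENNReal.ofReal_ne_top
  have hKr : K.toReal = (p-1)*D^2 := ENNReal.toReal_ofReal (by nlinarith)
  -- pointwise functions
  set F : S → ℝ≥0∞ := fun a => ((‖f a‖₊ : ℝ≥0∞)) ^ (2:ℝ) with hFdef
  set G : S → ℝ≥0∞ := fun a => K * ((‖g a‖₊ : ℝ≥0∞)) ^ (2:ℝ) with hGdef
  have hconv2 : ∀ z : X, ((‖z‖₊ : ℝ≥0∞)) ^ (2:ℝ) = ENNReal.ofReal (‖z‖^(2:ℕ)) := by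
    intro z
    rw [ENNReal.ofReal_pow (norm_nonneg z), (show ENNReal.ofReal ‖z‖ = (‖z‖₊ : ℝ≥0∞) from ENNReal.ofReal_eq_coe_nnreal (norm_nonneg z)),
      ← ENNReal.rpow_natCast]
    norm_num
  have hconvp : ∀ z : X, ((‖z‖₊ : ℝ≥0∞)) ^ p = ENNReal.ofReal (‖z‖ ^ p) := by
    intro z
    rw [← (show ENNReal.ofReal ‖z‖ = (‖z‖₊ : ℝ≥0∞) from ENNReal.ofReal_eq_coe_nnreal (norm_nonneg z)), ← ENNReal.ofReal_rpow_of_nonneg (norm_nonneg z)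
      (le_of_lt hp0)]
  -- pointwise inequality
  have hpt : ∀ᵐ a ∂μ, (‖(f+g) a‖₊ : ℝ≥0∞) ^ p + (‖(f-g) a‖₊ : ℝ≥0∞) ^ p
      ≤ 2 * (F a + G a) ^ (p/2) := by
    filter_upwards [Lp.coeFn_add f g, Lp.coeFn_sub f g] with a h1 h2
    rw [h1, h2]
    simp only [Pi.add_apply, Pi.sub_apply]
    have hv := vec_pointwise hp hD1 hsmooth (f a) (g a)
    have hK0 : (0:ℝ) ≤ (p-1)*D^2 := mul_nonneg (by linarith) (sq_nonneg D)
    have hbase : (0:ℝ) ≤ ‖f a‖^2 + (p-1)*D^2*‖g a‖^2 := by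
      have := mul_nonneg hK0 (sq_nonneg ‖g a‖)
      nlinarith [sq_nonneg ‖f a‖]
    calc (‖f a + g a‖₊ : ℝ≥0∞) ^ p + (‖f a - g a‖₊ : ℝ≥0∞) ^ p
        = ENNReal.ofReal (‖f a + g a‖ ^ p + ‖f a - g a‖ ^ p) := by
          rw [ENNReal.ofReal_add (Real.rpow_nonneg (norm_nonneg _) p)
            (Real.rpow_nonneg (norm_nonneg _) p), hconvp, hconvp]
      _ ≤ ENNReal.ofReal (2 * (‖f a‖^2 + (p-1)*D^2*‖g a‖^2) ^ (p/2)) :=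
          ENNReal.ofReal_le_ofReal hv
      _ = 2 * (F a + G a) ^ (p/2) := by
          rw [ENNReal.ofReal_mul (by norm_num : (0:ℝ) ≤ 2),
            ← ENNReal.ofReal_rpow_of_nonneg hbase (by linarith : (0:ℝ) ≤ p/2),
            ENNReal.ofReal_add (sq_nonneg ‖f a‖)
              (mul_nonneg hK0 (sq_nonneg ‖g a‖)),
            ENNReal.ofReal_mul hK0]
          simp only [hFdef, hGdef, hconv2, hKdef]
          norm_num
  -- measurability
  have hFmeas : AEMeasurable F μ :=
    ((Lp.aestronglyMeasurable f).enorm.pow_const (2:ℝ))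
  have hGmeas : AEMeasurable G μ :=
    (aemeasurable_const.mul ((Lp.aestronglyMeasurable g).enorm.pow_const (2:ℝ)))
  have hABmeas : AEMeasurable (fun a => (‖(f+g) a‖₊ : ℝ≥0∞) ^ p) μ :=
    ((Lp.aestronglyMeasurable (f+g)).enorm.pow_const p)
  -- integrate
  have hint : I (f+g) + I (f-g) ≤ 2 * ∫⁻ a, (F a + G a) ^ (p/2) ∂μ := by
    rw [hIdef]
    calc (∫⁻ a, (‖(f+g) a‖₊ : ℝ≥0∞) ^ p ∂μ) + (∫⁻ a, (‖(f-g) a‖₊ : ℝ≥0∞) ^ p ∂μ)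
        = ∫⁻ a, ((‖(f+g) a‖₊ : ℝ≥0∞) ^ p + (‖(f-g) a‖₊ : ℝ≥0∞) ^ p) ∂μ :=
          (lintegral_add_left' hABmeas _).symm
      _ ≤ ∫⁻ a, 2 * (F a + G a) ^ (p/2) ∂μ := lintegral_mono_ae hpt
      _ = 2 * ∫⁻ a, (F a + G a) ^ (p/2) ∂μ := lintegral_const_mul' 2 _ (by norm_num)
  -- Minkowski in L^{p/2}
  have hmink := ENNReal.lintegral_Lp_add_le hFmeas hGmeas
    (show 1 ≤ p/2 by linarith)
  -- identify the three integrals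
  have hFint : ∫⁻ a, (F a) ^ (p/2) ∂μ = I f := by
    rw [hIdef]
    apply lintegral_congr
    intro a
    simp only [hFdef]
    rw [← ENNReal.rpow_mul, show (2:ℝ)*(p/2) = p by ring]
  have hGint : ∫⁻ a, (G a) ^ (p/2) ∂μ = K ^ (p/2) * I g := by
    rw [hIdef, ← lintegral_const_mul' _ _ (by
      exact ENNReal.rpow_ne_top_of_nonneg (by linarith) hKfin)]
    apply lintegral_congr
    intro a
    simp only [hGdef]
    rw [ENNReal.mul_rpow_of_nonneg _ _ (by linarith : (0:ℝ) ≤ p/2), ← ENNReal.rpow_mul,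
      show (2:ℝ)*(p/2) = p by ring]
  rw [hFint, hGint] at hmink
  rw [show 1/(p/2) = 2/p by rw [one_div_div]] at hmink
  have hKpow : (K ^ (p/2) * I g) ^ ((2:ℝ)/p) = K * (I g) ^ ((2:ℝ)/p) := by
    rw [ENNReal.mul_rpow_of_nonneg _ _ (by positivity : (0:ℝ) ≤ 2/p), ← ENNReal.rpow_mul,
      show p/2 * (2/p) = 1 by field_simp, ENNReal.rpow_one]
  rw [hKpow] at hmink
  -- raise to the power p/2
  have hJ : (∫⁻ a, (F a + G a) ^ (p/2) ∂μ)
      ≤ ((I f) ^ ((2:ℝ)/p) + K * (I g) ^ ((2:ℝ)/p)) ^ (p/2) := by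
    have := ENNReal.rpow_le_rpow hmink (by linarith : (0:ℝ) ≤ p/2)
    rwa [← ENNReal.rpow_mul, show 2/p * (p/2) = 1 by field_simp, ENNReal.rpow_one] at this
  have hmain : I (f+g) + I (f-g)
      ≤ 2 * ((I f) ^ ((2:ℝ)/p) + K * (I g) ^ ((2:ℝ)/p)) ^ (p/2) := by
    calc I (f+g) + I (f-g) ≤ 2 * ∫⁻ a, (F a + G a) ^ (p/2) ∂μ := hint
      _ ≤ 2 * ((I f) ^ ((2:ℝ)/p) + K * (I g) ^ ((2:ℝ)/p)) ^ (p/2) := by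
          exact mul_le_mul_right hJ 2
  -- pass to real numbers
  have hSfin : ((I f) ^ ((2:ℝ)/p) + K * (I g) ^ ((2:ℝ)/p)) ≠ ∞ := by
    apply ENNReal.add_ne_top.2
    constructor
    · exact ENNReal.rpow_ne_top_of_nonneg (div_nonneg (by norm_num) (le_of_lt hp0)) (hIfin f)
    · exact ENNReal.mul_ne_top hKfin (ENNReal.rpow_ne_top_of_nonneg (div_nonneg (by norm_num) (le_of_lt hp0)) (hIfin g))
  have hRfin : 2 * ((I f) ^ ((2:ℝ)/p) + K * (I g) ^ ((2:ℝ)/p)) ^ (p/2) ≠ ∞ :=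
    ENNReal.mul_ne_top (by norm_num) (ENNReal.rpow_ne_top_of_nonneg (by linarith) hSfin)
  have hreal := ENNReal.toReal_mono hRfin hmain
  rw [ENNReal.toReal_add (hIfin _) (hIfin _), ENNReal.toReal_mul, ← ENNReal.toReal_rpow,
    ENNReal.toReal_add (ENNReal.rpow_ne_top_of_nonneg (div_nonneg (by norm_num) (le_of_lt hp0)) (hIfin f))
      (ENNReal.mul_ne_top hKfin (ENNReal.rpow_ne_top_of_nonneg (div_nonneg (by norm_num) (le_of_lt hp0)) (hIfin g))),
    ENNReal.toReal_mul] at hreal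
  rw [← hnormI, ← hnormI] at hreal
  have h2f := hnorm2 f
  have h2g := hnorm2 g
  rw [← h2f, ← h2g, hKr] at hreal
  rw [ENNReal.toReal_ofNat] at hreal
  -- hreal : ‖f+g‖^p + ‖f-g‖^p ≤ 2 * (‖f‖^2 + (p-1)*D^2*‖g‖^2)^(p/2)
  -- final power mean step
  have hA0 : (0:ℝ) ≤ ‖f + g‖ := norm_nonneg _
  have hB0 : (0:ℝ) ≤ ‖f - g‖ := norm_nonneg _
  have hC0 : (0:ℝ) ≤ ‖f‖^2 + (p-1)*D^2*‖g‖^2 := by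
    nlinarith [sq_nonneg ‖f‖, mul_nonneg (mul_nonneg (show (0:ℝ) ≤ p-1 by linarith)
      (sq_nonneg D)) (sq_nonneg ‖g‖)]
  have hj := jensen2 (sq_nonneg ‖f + g‖) (sq_nonneg ‖f - g‖) (show 1 ≤ p/2 by linarith)
  have hsq : ∀ r : ℝ, 0 ≤ r → (r^(2:ℕ)) ^ (p/2) = r ^ p := by
    intro r hr
    rw [← Real.rpow_natCast r 2, ← Real.rpow_mul hr,
      show ((2:ℕ):ℝ)*(p/2) = p by push_cast; ring]
  rw [hsq ‖f + g‖ hA0, hsq ‖f - g‖ hB0] at hj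
  -- hj : ((A^2+B^2)/2)^(p/2) ≤ (A^p + B^p)/2
  have hstep2 : (‖f + g‖^p + ‖f - g‖^p)/2 ≤ (‖f‖^2 + (p-1)*D^2*‖g‖^2)^(p/2) := by linarith
  have hfinal : ((‖f + g‖^2+‖f - g‖^2)/2 : ℝ) ≤ ‖f‖^2 + (p-1)*D^2*‖g‖^2 := by
    have h1 : (((‖f + g‖^2+‖f - g‖^2)/2)^(p/2) : ℝ) ≤ (‖f‖^2 + (p-1)*D^2*‖g‖^2)^(p/2) :=
      le_trans hj hstep2
    have hb0 : (0:ℝ) ≤ (‖f + g‖^2+‖f - g‖^2)/2 := by positivity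
    have h2 := Real.rpow_le_rpow (Real.rpow_nonneg hb0 (p/2)) h1
      (div_nonneg (by norm_num : (0:ℝ) ≤ 2) (le_of_lt hp0))
    rwa [← Real.rpow_mul hb0, ← Real.rpow_mul hC0,
      show p/2 * (2/p) = 1 by field_simp, Real.rpow_one, Real.rpow_one] at h2
  nlinarith [hfinal]
end

section
/- Let 2 ≤ p < ∞ and let X be a (2,D)-smooth Banach space. Then the sequence space ℓ^p(ℕ;X) is (2, D·√(p−1))-smooth; that is, for all x, y ∈ ℓ^p(ℕ;X) one has ‖x+y‖² + ‖x−y‖² ≤ 2‖x‖² + 2D²(p−1)‖y‖², where ‖x‖ = (Σ_n ‖x_n‖_X^p)^{1/p}. -/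
open Real

lemma helper2 {a b c : ℝ} (ha : 0 ≤ a) (hb : 0 ≤ b) (hc0 : 0 < c) (hc1 : c ≤ 1) :
    a ^ c + b ^ c ≤ 2 ^ (1 - c) * (a + b) ^ c := by
  have hP : 1 ≤ 1 / c := by rw [le_div_iff₀ hc0]; linarith
  have h := Real.arith_mean_le_rpow_mean (Finset.univ : Finset (Fin 2))
    (fun _ => (1:ℝ)/2) (![a ^ c, b ^ c]) (by intro i _; norm_num)
    (by simp [Fin.sum_univ_two])
    (by intro i _; fin_cases i <;> simp [Real.rpow_nonneg, ha, hb]) hP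
  simp only [Fin.sum_univ_two, Matrix.cons_val_zero, Matrix.cons_val_one, Matrix.head_cons] at h
  have hac : (a ^ c) ^ (1/c) = a := by
    rw [← Real.rpow_mul ha, mul_one_div, div_self hc0.ne', Real.rpow_one]
  have hbc : (b ^ c) ^ (1/c) = b := by
    rw [← Real.rpow_mul hb, mul_one_div, div_self hc0.ne', Real.rpow_one]
  rw [hac, hbc, one_div_one_div] at h
  have h2 : 1 / 2 * a + 1 / 2 * b = (a+b)/2 := by ring
  rw [h2, Real.div_rpow (by linarith) (by norm_num)] at h
  have : a ^ c + b ^ c ≤ 2 * ((a+b)^c / 2^c) := by linarith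
  calc a ^ c + b ^ c ≤ 2 * ((a+b)^c / 2^c) := this
    _ = 2 ^ (1-c) * (a+b)^c := by
        rw [Real.rpow_sub (by norm_num), Real.rpow_one]; ring

-- Base case: H(q) for 0 ≤ q ≤ 2
lemma baseH {q t : ℝ} (hq0 : 0 ≤ q) (hq2 : q ≤ 2) (ht0 : 0 ≤ t) (ht1 : t ≤ 1) :
    (1+t) ^ q + (1-t) ^ q ≤ 2 * (1 + (q+1) * t^2) ^ (q/2) := by
  have h1t : (0:ℝ) ≤ 1 + t := by linarith
  have h1t' : (0:ℝ) ≤ 1 - t := by linarith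
  have hbase : (0:ℝ) < 1 + (q+1) * t^2 := by nlinarith
  rcases eq_or_lt_of_le hq0 with h0 | h0
  · rw [← h0]; simp [Real.rpow_zero]; norm_num
  have hc0 : 0 < q/2 := by linarith
  have hc1 : q/2 ≤ 1 := by linarith
  have e1 : (1+t) ^ q = ((1+t)^2 : ℝ) ^ (q/2) := by
    rw [← Real.rpow_natCast (1+t) 2, ← Real.rpow_mul h1t]; congr 1; push_cast; ring
  have e2 : (1-t) ^ q = ((1-t)^2 : ℝ) ^ (q/2) := by
    rw [← Real.rpow_natCast (1-t) 2, ← Real.rpow_mul h1t']; congr 1; push_cast; ring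
  rw [e1, e2]
  have h := helper2 (a := (1+t)^2) (b := (1-t)^2) (by positivity) (by positivity) hc0 hc1
  have hsum : ((1+t)^2 + (1-t)^2 : ℝ) = 2 * (1 + t^2) := by ring
  rw [hsum] at h
  have h2 : (2 * (1 + t^2) : ℝ) ^ (q/2) = 2 ^ (q/2) * (1+t^2) ^ (q/2) :=
    Real.mul_rpow (by norm_num) (by positivity)
  rw [h2] at h
  have h3 : (2:ℝ) ^ (1 - q/2) * (2 ^ (q/2) * (1+t^2) ^ (q/2)) = 2 * (1+t^2)^(q/2) := by
    rw [← mul_assoc, ← Real.rpow_add (by norm_num)]; norm_num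
  rw [h3] at h
  refine h.trans ?_
  have : ((1:ℝ)+t^2) ^ (q/2) ≤ (1 + (q+1)*t^2) ^ (q/2) := by
    apply Real.rpow_le_rpow (by positivity) (by nlinarith) (le_of_lt hc0)
  linarith

open Real Set

-- the derivative bound: ψ(t) = (1+t)^(q-1) - (1-t)^(q-1) ≤ 2(q-1)t(1+(q-1)t²)^((q-2)/2)
lemma psi_bound {q : ℝ} (hq : 2 ≤ q)
    (H : ∀ s : ℝ, 0 ≤ s → s ≤ 1 →
      (1+s) ^ (q-2) + (1-s) ^ (q-2) ≤ 2 * (1 + (q-1) * s^2) ^ ((q-2)/2))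
    {t : ℝ} (ht0 : 0 ≤ t) (ht1 : t ≤ 1) :
    (1+t) ^ (q-1) - (1-t) ^ (q-1) ≤ 2 * (q-1) * (1 + (q-1) * t^2) ^ ((q-2)/2) * t := by
  set C : ℝ := 2 * (q-1) * (1 + (q-1) * t^2) ^ ((q-2)/2) with hC
  set ψ : ℝ → ℝ := fun s => (1+s) ^ (q-1) - (1-s) ^ (q-1) with hψ
  set ψ' : ℝ → ℝ := fun s => 1 * (q-1) * (1+s) ^ (q-2) - (-1) * (q-1) * (1-s) ^ (q-2) with hψ'
  have hderiv : ∀ s : ℝ, HasDerivAt ψ (ψ' s) s := by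
    intro s
    have h1 : HasDerivAt (fun s : ℝ => 1 + s) 1 s := by
      simpa using (hasDerivAt_id s).const_add 1
    have h2 : HasDerivAt (fun s : ℝ => 1 - s) (-1) s := by
      simpa using (hasDerivAt_id s).const_sub 1
    have hA : HasDerivAt (fun s : ℝ => (1+s) ^ (q-1)) (1 * (q-1) * (1+s) ^ (q-1-1)) s :=
      h1.rpow_const (p := q-1) (Or.inr (by linarith : (1:ℝ) ≤ q - 1))
    have hB : HasDerivAt (fun s : ℝ => (1-s) ^ (q-1)) ((-1) * (q-1) * (1-s) ^ (q-1-1)) s :=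
      h2.rpow_const (p := q-1) (Or.inr (by linarith : (1:ℝ) ≤ q - 1))
    have : q - 1 - 1 = q - 2 := by ring
    rw [this] at hA hB
    exact hA.sub hB
  have hbound : ∀ s ∈ Ico (0:ℝ) t, ‖ψ' s‖ ≤ C := by
    intro s hs
    have hs0 : 0 ≤ s := hs.1
    have hs1 : s ≤ 1 := le_trans (le_of_lt hs.2) ht1
    have hnn : 0 ≤ ψ' s := by
      simp only [hψ']
      have := Real.rpow_nonneg (by linarith : (0:ℝ) ≤ 1+s) (q-2)
      have := Real.rpow_nonneg (by linarith : (0:ℝ) ≤ 1-s) (q-2)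
      nlinarith
    rw [Real.norm_of_nonneg hnn]
    have h1 := H s hs0 hs1
    have h2 : ((1:ℝ) + (q-1) * s^2) ^ ((q-2)/2) ≤ (1 + (q-1) * t^2) ^ ((q-2)/2) := by
      apply Real.rpow_le_rpow (by nlinarith) (by nlinarith [pow_le_pow_left₀ hs0 hs.2.le 2]) (by linarith)
    simp only [hψ', hC]
    nlinarith
  have key := norm_image_sub_le_of_norm_deriv_le_segment'
    (f := ψ) (f' := ψ') (a := 0) (b := t)
    (fun s _ => (hderiv s).hasDerivWithinAt) hbound t (right_mem_Icc.mpr ht0)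
  have hψ0 : ψ 0 = 0 := by simp [hψ]
  rw [hψ0, sub_zero] at key
  have : ψ t ≤ C * (t - 0) := le_trans (le_abs_self _) key
  simpa [hψ, hC] using this

lemma stepS {q : ℝ} (hq : 2 ≤ q)
    (H : ∀ s : ℝ, 0 ≤ s → s ≤ 1 →
      (1+s) ^ (q-2) + (1-s) ^ (q-2) ≤ 2 * (1 + (q-1) * s^2) ^ ((q-2)/2))
    {t : ℝ} (ht0 : 0 ≤ t) (ht1 : t ≤ 1) :
    (1+t) ^ q + (1-t) ^ q ≤ 2 * (1 + (q-1) * t^2) ^ (q/2) := by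
  set f : ℝ → ℝ := fun s => 2 * (1 + (q-1) * s^2) ^ (q/2) - (1+s) ^ q - (1-s) ^ q with hf
  set f' : ℝ → ℝ := fun s =>
    2 * ((q-1) * (2*s^1) * (q/2) * (1 + (q-1) * s^2) ^ (q/2-1))
      - 1 * q * (1+s) ^ (q-1) - (-1) * q * (1-s) ^ (q-1) with hf'
  have hpos : ∀ s : ℝ, (0:ℝ) < 1 + (q-1) * s^2 := fun s => by nlinarith [sq_nonneg s]
  have hderiv : ∀ s : ℝ, HasDerivAt f (f' s) s := by
    intro s
    have h1 : HasDerivAt (fun s : ℝ => 1 + s) 1 s := by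
      simpa using (hasDerivAt_id s).const_add 1
    have h2 : HasDerivAt (fun s : ℝ => 1 - s) (-1) s := by
      simpa using (hasDerivAt_id s).const_sub 1
    have hA : HasDerivAt (fun s : ℝ => (1+s) ^ q) (1 * q * (1+s) ^ (q-1)) s :=
      h1.rpow_const (p := q) (Or.inr (by linarith : (1:ℝ) ≤ q))
    have hB : HasDerivAt (fun s : ℝ => (1-s) ^ q) ((-1) * q * (1-s) ^ (q-1)) s :=
      h2.rpow_const (p := q) (Or.inr (by linarith : (1:ℝ) ≤ q))
    have hg : HasDerivAt (fun s : ℝ => 1 + (q-1) * s^2) ((q-1) * (2*s^1)) s := by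
      simpa using (((hasDerivAt_pow 2 s).const_mul (q-1)).const_add 1)
    have hG : HasDerivAt (fun s : ℝ => (1 + (q-1) * s^2) ^ (q/2))
        ((q-1) * (2*s^1) * (q/2) * (1 + (q-1) * s^2) ^ (q/2-1)) s :=
      hg.rpow_const (p := q/2) (Or.inl (hpos s).ne')
    exact ((hG.const_mul 2).sub hA).sub hB
  have hmono : MonotoneOn f (Set.Icc 0 1) := by
    apply monotoneOn_of_deriv_nonneg (convex_Icc 0 1)
    · exact fun s _ => ((hderiv s).continuousAt).continuousWithinAt
    · intro s _
      exact ((hderiv s).differentiableAt).differentiableWithinAt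
    · intro s hs
      rw [interior_Icc] at hs
      rw [(hderiv s).deriv]
      have hs0 : 0 ≤ s := hs.1.le
      have hs1 : s ≤ 1 := hs.2.le
      have hpb := psi_bound hq H hs0 hs1
      have he : q/2 - 1 = (q-2)/2 := by ring
      simp only [hf', he, pow_one]
      have hq0 : 0 < q := by linarith
      nlinarith [Real.rpow_nonneg (hpos s).le ((q-2)/2)]
  have h01 : (0:ℝ) ∈ Set.Icc (0:ℝ) 1 := by constructor <;> norm_num
  have ht : t ∈ Set.Icc (0:ℝ) 1 := ⟨ht0, ht1⟩
  have := hmono h01 ht ht0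
  have hf0 : f 0 = 0 := by simp [hf]; norm_num
  rw [hf0] at this
  simp only [hf] at this
  linarith

lemma Hall : ∀ n : ℕ, ∀ q : ℝ, 0 ≤ q → q ≤ 2*n + 2 → ∀ t : ℝ, 0 ≤ t → t ≤ 1 →
    (1+t) ^ q + (1-t) ^ q ≤ 2 * (1 + (q+1) * t^2) ^ (q/2) := by
  intro n
  induction n with
  | zero => intro q hq0 hq2 t ht0 ht1; exact baseH hq0 (by norm_num at hq2; linarith) ht0 ht1
  | succ n IH =>
    intro q hq0 hq2 t ht0 ht1
    by_cases hq : q ≤ 2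
    · exact baseH hq0 hq ht0 ht1
    push_neg at hq
    have h2q : 2 ≤ q := hq.le
    have hIH : ∀ s : ℝ, 0 ≤ s → s ≤ 1 →
        (1+s) ^ (q-2) + (1-s) ^ (q-2) ≤ 2 * (1 + (q-1) * s^2) ^ ((q-2)/2) := by
      intro s hs0 hs1
      have := IH (q-2) (by linarith) (by push_cast at hq2 ⊢; linarith) s hs0 hs1
      have he : q - 2 + 1 = q - 1 := by ring
      rwa [he] at this
    have hS := stepS h2q hIH ht0 ht1
    refine hS.trans ?_
    have : ((1:ℝ) + (q-1) * t^2) ^ (q/2) ≤ (1 + (q+1) * t^2) ^ (q/2) := by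
      apply Real.rpow_le_rpow (by nlinarith [sq_nonneg t]) (by nlinarith [sq_nonneg t])
        (by linarith)
    linarith

lemma S_of {p : ℝ} (hp : 2 ≤ p) {t : ℝ} (ht0 : 0 ≤ t) (ht1 : t ≤ 1) :
    (1+t) ^ p + (1-t) ^ p ≤ 2 * (1 + (p-1) * t^2) ^ (p/2) := by
  obtain ⟨n, hn⟩ := exists_nat_ge p
  refine stepS hp (fun s hs0 hs1 => ?_) ht0 ht1
  have := Hall n (p-2) (by linarith) (by push_cast; linarith) s hs0 hs1
  have he : p - 2 + 1 = p - 1 := by ring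
  rwa [he] at this

-- homogeneous version
lemma scalarS {p : ℝ} (hp : 2 ≤ p) {a b : ℝ} (hb0 : 0 ≤ b) (hba : b ≤ a) :
    (a+b) ^ p + (a-b) ^ p ≤ 2 * (a^2 + (p-1) * b^2) ^ (p/2) := by
  have ha0 : 0 ≤ a := le_trans hb0 hba
  rcases eq_or_lt_of_le ha0 with h0 | h0
  · have ha : a = 0 := h0.symm
    subst ha
    have hb : b = 0 := le_antisymm hba hb0
    subst hb
    have hp0 : p ≠ 0 := by positivity
    have hp2 : p/2 ≠ 0 := by positivity
    norm_num [Real.zero_rpow hp0, Real.zero_rpow hp2]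
  set t : ℝ := b / a with htdef
  have ht0 : 0 ≤ t := div_nonneg hb0 ha0
  have ht1 : t ≤ 1 := (div_le_one h0).mpr hba
  have hS := S_of hp ht0 ht1
  have e1 : a + b = a * (1 + t) := by rw [htdef]; field_simp
  have e2 : a - b = a * (1 - t) := by rw [htdef]; field_simp
  have e3 : a^2 + (p-1) * b^2 = a^2 * (1 + (p-1) * t^2) := by
    rw [htdef]; field_simp
  rw [e1, e2, e3]
  rw [Real.mul_rpow ha0 (by linarith), Real.mul_rpow ha0 (by linarith)]
  have e4 : ((a^2 : ℝ) * (1 + (p-1)*t^2)) ^ (p/2)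
      = a ^ p * (1 + (p-1)*t^2) ^ (p/2) := by
    rw [Real.mul_rpow (by positivity) (by nlinarith [sq_nonneg t]),
      ← Real.rpow_natCast a 2, ← Real.rpow_mul ha0]
    have h22 : ((2:ℕ):ℝ) * (p/2) = p := by push_cast; ring
    rw [h22]
  rw [e4]
  have hap : 0 ≤ a ^ p := Real.rpow_nonneg ha0 p
  nlinarith [hS]

-- convexity helper: ((u+v)/2)^r ≤ (u^r+v^r)/2
lemma helper3 {u v r : ℝ} (hu : 0 ≤ u) (hv : 0 ≤ v) (hr : 1 ≤ r) :
    ((u+v)/2) ^ r ≤ (u ^ r + v ^ r)/2 := by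
  have h := Real.rpow_arith_mean_le_arith_mean_rpow (Finset.univ : Finset (Fin 2))
    (fun _ => (1:ℝ)/2) (![u, v]) (by intro i _; norm_num)
    (by simp [Fin.sum_univ_two])
    (by intro i _; fin_cases i <;> simpa) hr
  simp only [Fin.sum_univ_two, Matrix.cons_val_zero, Matrix.cons_val_one, Matrix.head_cons] at h
  have e : (1:ℝ)/2 * u + 1/2 * v = (u+v)/2 := by ring
  rw [e] at h
  linarith

lemma rpow_base_le {x y r : ℝ} (hy : 0 ≤ y) (hr : 0 < r) (h : x ^ r ≤ y ^ r) (hx : 0 ≤ x) :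
    x ≤ y := by
  by_contra hc
  push_neg at hc
  exact absurd h (not_le.mpr (Real.rpow_lt_rpow hy hc hr))

-- two-point inequality in a (2,D)-smooth space, under ‖a-b‖ ≤ ‖a+b‖
lemma vectorS_aux {X : Type*} [NormedAddCommGroup X] {p D : ℝ} (hp : 2 ≤ p) (hD1 : 1 ≤ D^2)
    (hsmooth : ∀ x y : X, ‖x + y‖ ^ 2 + ‖x - y‖ ^ 2 ≤ 2 * ‖x‖ ^ 2 + 2 * D ^ 2 * ‖y‖ ^ 2)
    (a b : X) (hUV : ‖a - b‖ ≤ ‖a + b‖) :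
    ‖a + b‖ ^ p + ‖a - b‖ ^ p ≤ 2 * (‖a‖^2 + (p-1) * D^2 * ‖b‖^2) ^ (p/2) := by
  set U := ‖a + b‖
  set V := ‖a - b‖
  have hU0 : 0 ≤ U := norm_nonneg _
  have hV0 : 0 ≤ V := norm_nonneg _
  set m : ℝ := (U + V)/2 with hm
  set d : ℝ := (U - V)/2 with hd
  have hd0 : 0 ≤ d := by rw [hd]; linarith
  have hdm : d ≤ m := by rw [hd, hm]; linarith
  have hdb : d ≤ ‖b‖ := by
    have h1 : U - V ≤ ‖(a + b) - (a - b)‖ := norm_sub_norm_le _ _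
    have h2 : (a + b) - (a - b) = b + b := by abel
    have h3 : ‖b + b‖ ≤ ‖b‖ + ‖b‖ := norm_add_le _ _
    rw [h2] at h1
    rw [hd]; linarith
  have hsc := scalarS hp hd0 hdm
  have hU : m + d = U := by rw [hm, hd]; ring
  have hV : m - d = V := by rw [hm, hd]; ring
  rw [hU, hV] at hsc
  refine hsc.trans ?_
  have hbase : m^2 + (p-1) * d^2 ≤ ‖a‖^2 + (p-1) * D^2 * ‖b‖^2 := by
    have hsm := hsmooth a b
    have h4 : m^2 + d^2 = (U^2 + V^2)/2 := by rw [hm, hd]; ring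
    have hd2 : d^2 ≤ ‖b‖^2 := by nlinarith [norm_nonneg b]
    have hp2 : (0:ℝ) ≤ p - 2 := by linarith
    have h6 : (p-2) * d^2 ≤ (p-2) * ‖b‖^2 := mul_le_mul_of_nonneg_left hd2 hp2
    have h7 : (p-2) * ‖b‖^2 ≤ (p-2) * (D^2 * ‖b‖^2) := by nlinarith [sq_nonneg (‖b‖), mul_le_mul_of_nonneg_left (mul_le_mul_of_nonneg_right hD1 (sq_nonneg (‖b‖))) hp2]
    have h8 : U^2 + V^2 ≤ 2 * ‖a‖^2 + 2 * D^2 * ‖b‖^2 := hsm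
    nlinarith
  have h5 : (0:ℝ) ≤ m^2 + (p-1) * d^2 := by nlinarith
  have := Real.rpow_le_rpow h5 hbase (by linarith : (0:ℝ) ≤ p/2)
  linarith

lemma vectorS {X : Type*} [NormedAddCommGroup X] {p D : ℝ} (hp : 2 ≤ p) (hD1 : 1 ≤ D^2)
    (hsmooth : ∀ x y : X, ‖x + y‖ ^ 2 + ‖x - y‖ ^ 2 ≤ 2 * ‖x‖ ^ 2 + 2 * D ^ 2 * ‖y‖ ^ 2)
    (a b : X) :
    ‖a + b‖ ^ p + ‖a - b‖ ^ p ≤ 2 * (‖a‖^2 + (p-1) * D^2 * ‖b‖^2) ^ (p/2) := by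
  rcases le_total ‖a - b‖ ‖a + b‖ with h | h
  · exact vectorS_aux hp hD1 hsmooth a b h
  · have := vectorS_aux hp hD1 hsmooth a (-b) ?_
    · rw [← sub_eq_add_neg, sub_neg_eq_add, norm_neg] at this
      linarith
    · rw [← sub_eq_add_neg, sub_neg_eq_add]
      exact h



/-- **`ℓ^p(ℕ;X)` is `(2, D√(p−1))`-smooth when `X` is `(2,D)`-smooth and `2 ≤ p < ∞`.**
For all `x, y ∈ ℓ^p(ℕ;X)` one has `‖x+y‖² + ‖x−y‖² ≤ 2‖x‖² + 2D²(p−1)‖y‖²`. -/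
theorem lp_sequence_two_smooth
    {X : Type*} [NormedAddCommGroup X] [NormedSpace ℝ X] [CompleteSpace X]
    (p D : ℝ) (hp : 2 ≤ p) (hD : 0 ≤ D)
    (hsmooth : ∀ x y : X,
      ‖x + y‖ ^ 2 + ‖x - y‖ ^ 2 ≤ 2 * ‖x‖ ^ 2 + 2 * D ^ 2 * ‖y‖ ^ 2)
    (x y : lp (fun _ : ℕ => X) (ENNReal.ofReal p)) :
    ‖x + y‖ ^ 2 + ‖x - y‖ ^ 2 ≤ 2 * ‖x‖ ^ 2 + 2 * D ^ 2 * (p - 1) * ‖y‖ ^ 2 := by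
  have hp0 : (0:ℝ) < p := by linarith
  have hPt : (ENNReal.ofReal p).toReal = p := ENNReal.toReal_ofReal hp0.le
  have hPpos : 0 < (ENNReal.ofReal p).toReal := by rw [hPt]; linarith
  by_cases htriv : ∀ z : X, z = 0
  · have hzero : ∀ f : lp (fun _ : ℕ => X) (ENNReal.ofReal p), ‖f‖ = 0 := by
      intro f
      rw [lp.norm_eq_tsum_rpow hPpos f]
      have h1 : ∀ n : ℕ, ‖f n‖ ^ (ENNReal.ofReal p).toReal = 0 := by
        intro n
        rw [htriv (f n), norm_zero]
        exact Real.zero_rpow (by rw [hPt]; positivity)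
      rw [tsum_congr h1, tsum_zero]
      exact Real.zero_rpow (by rw [hPt]; positivity)
    rw [hzero x, hzero y, hzero (x + y), hzero (x - y)]
    norm_num
  push_neg at htriv
  obtain ⟨z, hz⟩ := htriv
  have hD1 : 1 ≤ D ^ 2 := by
    have h := hsmooth 0 z
    rw [zero_add, zero_sub, norm_neg, norm_zero] at h
    have hz0 : 0 < ‖z‖ ^ 2 := pow_pos (norm_pos_iff.mpr hz) 2
    nlinarith
  -- notation
  have hr1 : (1:ℝ) ≤ p/2 := by linarith
  have hr0 : (0:ℝ) < p/2 := by linarith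
  set c : ℝ := (p - 1) * D ^ 2 with hc
  have hc0 : 0 ≤ c := by nlinarith [sq_nonneg D]
  set u : ℕ → ℝ := fun n => ‖x n‖ ^ 2 with hu
  set v : ℕ → ℝ := fun n => c * ‖y n‖ ^ 2 with hv
  have hu0 : ∀ n, 0 ≤ u n := fun n => sq_nonneg _
  have hv0 : ∀ n, 0 ≤ v n := fun n => mul_nonneg hc0 (sq_nonneg _)
  -- coercion of sums
  have hxy : ∀ n : ℕ, (x + y) n = x n + y n := fun n => by rw [lp.coeFn_add]; rfl
  have hxy' : ∀ n : ℕ, (x - y) n = x n - y n := fun n => by rw [lp.coeFn_sub]; rfl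
  -- rpow identities
  have hur : ∀ n, u n ^ (p/2) = ‖x n‖ ^ p := by
    intro n
    simp only [hu]
    rw [← Real.rpow_two, ← Real.rpow_mul (norm_nonneg _),
      show (2:ℝ) * (p/2) = p by ring]
  have hvr : ∀ n, v n ^ (p/2) = c ^ (p/2) * ‖y n‖ ^ p := by
    intro n
    simp only [hv]
    rw [Real.mul_rpow hc0 (sq_nonneg _), ← Real.rpow_two, ← Real.rpow_mul (norm_nonneg _),
      show (2:ℝ) * (p/2) = p by ring]
  -- summability
  have Sx : Summable fun n => ‖x n‖ ^ p := by
    have := (lp.memℓp x).summable hPpos; rwa [hPt] at this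
  have Sy : Summable fun n => ‖y n‖ ^ p := by
    have := (lp.memℓp y).summable hPpos; rwa [hPt] at this
  have Sxy : Summable fun n => ‖x n + y n‖ ^ p := by
    have := (lp.memℓp (x + y)).summable hPpos; rw [hPt] at this
    exact this.congr fun n => by rw [hxy n]
  have Sxd : Summable fun n => ‖x n - y n‖ ^ p := by
    have := (lp.memℓp (x - y)).summable hPpos; rw [hPt] at this
    exact this.congr fun n => by rw [hxy' n]
  have Su2 : Summable fun n => u n ^ (p/2) := Sx.congr fun n => (hur n).symm
  have Sv2 : Summable fun n => v n ^ (p/2) :=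
    (Sy.mul_left (c ^ (p/2))).congr fun n => (hvr n).symm
  -- Minkowski in ℓ^{p/2}
  obtain ⟨Ssum, hmk⟩ := Real.Lp_add_le_tsum_of_nonneg hr1 hu0 hv0 Su2 Sv2
  -- norm formulas
  have hA : ‖x‖ ^ p = ∑' n, ‖x n‖ ^ p := by
    have := lp.norm_rpow_eq_tsum hPpos x; rwa [hPt] at this
  have hB : ‖y‖ ^ p = ∑' n, ‖y n‖ ^ p := by
    have := lp.norm_rpow_eq_tsum hPpos y; rwa [hPt] at this
  have hU : ‖x + y‖ ^ p = ∑' n, ‖x n + y n‖ ^ p := by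
    have := lp.norm_rpow_eq_tsum hPpos (x + y); rw [hPt] at this
    rw [this]; exact tsum_congr fun n => by rw [hxy n]
  have hV : ‖x - y‖ ^ p = ∑' n, ‖x n - y n‖ ^ p := by
    have := lp.norm_rpow_eq_tsum hPpos (x - y); rw [hPt] at this
    rw [this]; exact tsum_congr fun n => by rw [hxy' n]
  -- Step 1: termwise two-point inequality and summation
  have hterm : ∀ n, ‖x n + y n‖ ^ p + ‖x n - y n‖ ^ p ≤ 2 * (u n + v n) ^ (p/2) := by
    intro n
    simp only [hu, hv, hc]
    exact vectorS (X := X) hp hD1 hsmooth (x n) (y n)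
  have hS1 : ‖x + y‖ ^ p + ‖x - y‖ ^ p ≤ 2 * ∑' n, (u n + v n) ^ (p/2) := by
    rw [hU, hV, ← Summable.tsum_add Sxy Sxd, ← tsum_mul_left]
    exact Summable.tsum_le_tsum hterm (Sxy.add Sxd) (Ssum.mul_left 2)
  -- Step 2: evaluate the Minkowski bound
  set W : ℝ := ‖x‖ ^ 2 + c * ‖y‖ ^ 2 with hW
  have hW0 : 0 ≤ W := add_nonneg (sq_nonneg _) (mul_nonneg hc0 (sq_nonneg _))
  have hmk' : (∑' n, (u n + v n) ^ (p/2)) ^ (1/(p/2)) ≤ W := by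
    refine hmk.trans ?_
    have e1 : (∑' n, u n ^ (p/2)) ^ (1/(p/2)) = ‖x‖ ^ 2 := by
      rw [tsum_congr hur, ← hA, ← Real.rpow_mul (lp.norm_nonneg' x),
        show p * (1/(p/2)) = (2:ℝ) by field_simp, Real.rpow_two]
    have e2 : (∑' n, v n ^ (p/2)) ^ (1/(p/2)) = c * ‖y‖ ^ 2 := by
      rw [tsum_congr hvr, tsum_mul_left, ← hB,
        Real.mul_rpow (Real.rpow_nonneg hc0 _) (Real.rpow_nonneg (lp.norm_nonneg' y) _),
        ← Real.rpow_mul hc0, ← Real.rpow_mul (lp.norm_nonneg' y),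
        show (p/2) * (1/(p/2)) = (1:ℝ) by field_simp,
        show p * (1/(p/2)) = (2:ℝ) by field_simp, Real.rpow_one, Real.rpow_two]
    rw [e1, e2, hW]
  have hS2 : (∑' n, (u n + v n) ^ (p/2)) ≤ W ^ (p/2) := by
    have h0 : 0 ≤ ∑' n, (u n + v n) ^ (p/2) :=
      tsum_nonneg fun n => Real.rpow_nonneg (by positivity) _
    have e : (∑' n, (u n + v n) ^ (p/2)) =
        ((∑' n, (u n + v n) ^ (p/2)) ^ (1/(p/2))) ^ (p/2) := by
      rw [← Real.rpow_mul h0, one_div, inv_mul_cancel₀ hr0.ne', Real.rpow_one]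
    rw [e]
    exact Real.rpow_le_rpow (Real.rpow_nonneg h0 _) hmk' hr0.le
  -- Step 3: back from p-th powers to squares
  have hUr : ((‖x + y‖:ℝ) ^ 2) ^ (p/2) = ‖x + y‖ ^ p := by
    rw [← Real.rpow_two, ← Real.rpow_mul (lp.norm_nonneg' (x + y)),
      show (2:ℝ) * (p/2) = p by ring]
  have hVr : ((‖x - y‖:ℝ) ^ 2) ^ (p/2) = ‖x - y‖ ^ p := by
    rw [← Real.rpow_two, ← Real.rpow_mul (lp.norm_nonneg' (x - y)),
      show (2:ℝ) * (p/2) = p by ring]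
  have h3 : ((‖x + y‖ ^ 2 + ‖x - y‖ ^ 2)/2 : ℝ) ^ (p/2) ≤ W ^ (p/2) := by
    refine (helper3 (sq_nonneg ‖x + y‖) (sq_nonneg ‖x - y‖) hr1).trans ?_
    rw [hUr, hVr]
    linarith [hS1, hS2]
  have hfin : (‖x + y‖ ^ 2 + ‖x - y‖ ^ 2)/2 ≤ W :=
    rpow_base_le hW0 hr0 h3 (by have := sq_nonneg ‖x + y‖; have := sq_nonneg ‖x - y‖; linarith)
  rw [hW, hc] at hfin
  nlinarith [sq_nonneg ‖y‖]
end

section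
/- Let X be a real normed space, let λ > 0 and D ≥ 0, and let q : X → ℝ be twice Fréchet differentiable with q(x) ≥ 0 and q''(x)(y,y) ≤ 2D²‖y‖² for all x, y ∈ X. Define h : X → ℝ by h(x) = (1 + λ·q(x))^{1/2}. Then h is twice Fréchet differentiable, its second derivative satisfies h''(x)(y,y) = λ·q''(x)(y,y) / (2(1+λq(x))^{1/2}) − λ²·(q'(x)y)² / (4(1+λq(x))^{3/2}), and consequently h''(x)(y,y) ≤ D²·λ·‖y‖² for all x, y ∈ X. -/
/-- **Second derivative formula and bound for `h_λ(x) = (1 + λ q(x))^{1/2}`.**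
If `q : X → ℝ` is twice Fréchet differentiable with `q ≥ 0` and
`q''(x)(y,y) ≤ 2D²‖y‖²`, and `λ > 0`, `D ≥ 0`, then `h(x) = (1 + λ q(x))^{1/2}` is twice
Fréchet differentiable with
`h''(x)(y,y) = λ q''(x)(y,y)/(2(1+λq(x))^{1/2}) − λ² (q'(x)y)²/(4(1+λq(x))^{3/2})`,
and consequently `h''(x)(y,y) ≤ D² λ ‖y‖²`. -/
theorem sqrt_one_add_lambda_second_deriv
    {X : Type*} [NormedAddCommGroup X] [NormedSpace ℝ X]
    (lam D : ℝ) (hlam : 0 < lam) (hD : 0 ≤ D)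
    (q : X → ℝ) (hq : Differentiable ℝ q) (hq' : Differentiable ℝ (fderiv ℝ q))
    (hq0 : ∀ x, 0 ≤ q x)
    (hq'' : ∀ x y : X, fderiv ℝ (fderiv ℝ q) x y y ≤ 2 * D ^ 2 * ‖y‖ ^ 2) :
    Differentiable ℝ (fun x => Real.sqrt (1 + lam * q x)) ∧
    Differentiable ℝ (fderiv ℝ (fun x => Real.sqrt (1 + lam * q x))) ∧
    ∀ x y : X,
      fderiv ℝ (fderiv ℝ (fun x => Real.sqrt (1 + lam * q x))) x y y
        = lam * (fderiv ℝ (fderiv ℝ q) x y y) / (2 * (1 + lam * q x) ^ ((1 : ℝ) / 2))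
          - lam ^ 2 * (fderiv ℝ q x y) ^ 2 / (4 * (1 + lam * q x) ^ ((3 : ℝ) / 2)) ∧
      fderiv ℝ (fderiv ℝ (fun x => Real.sqrt (1 + lam * q x))) x y y
        ≤ D ^ 2 * lam * ‖y‖ ^ 2 := by
  have hu1 : ∀ x : X, (1 : ℝ) ≤ 1 + lam * q x := fun x => by nlinarith [hq0 x]
  have hu_pos : ∀ x : X, (0 : ℝ) < 1 + lam * q x := fun x => lt_of_lt_of_le one_pos (hu1 x)
  have hs_pos : ∀ x : X, 0 < Real.sqrt (1 + lam * q x) := fun x => Real.sqrt_pos.2 (hu_pos x)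
  have hs1 : ∀ x : X, (1 : ℝ) ≤ Real.sqrt (1 + lam * q x) := fun x => by
    have := Real.sqrt_le_sqrt (hu1 x)
    simpa using this
  -- derivative of u x = 1 + lam * q x
  have hu' : ∀ x : X, HasFDerivAt (fun x => 1 + lam * q x) (lam • fderiv ℝ q x) x := fun x =>
    ((hq x).hasFDerivAt.const_mul lam).const_add 1
  -- c : the coefficient in the first derivative
  set c : X → ℝ := fun x => (lam / 2) * (Real.sqrt (1 + lam * q x))⁻¹ with hc_def
  have hc_pos : ∀ x, 0 < c x := fun x => by
    have := hs_pos x; positivity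
  -- first derivative
  have hh' : ∀ x : X, HasFDerivAt (fun x => Real.sqrt (1 + lam * q x))
      (c x • fderiv ℝ q x) x := by
    intro x
    have hs := (Real.hasDerivAt_sqrt (ne_of_gt (hu_pos x))).comp_hasFDerivAt x (hu' x)
    refine hs.congr_fderiv ?_
    rw [smul_smul]
    congr 1
    have := (hs_pos x).ne'
    simp only [hc_def]
    field_simp
  have hDh : Differentiable ℝ (fun x => Real.sqrt (1 + lam * q x)) :=
    fun x => (hh' x).differentiableAt
  have hfd : fderiv ℝ (fun x => Real.sqrt (1 + lam * q x)) = fun x => c x • fderiv ℝ q x :=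
    funext fun x => (hh' x).fderiv
  -- derivative of c
  have hc' : ∀ x : X, HasFDerivAt c
      ((-(lam ^ 2) / (4 * Real.sqrt (1 + lam * q x) ^ 3)) • fderiv ℝ q x) x := by
    intro x
    have hinv : HasFDerivAt (fun x => (Real.sqrt (1 + lam * q x))⁻¹)
        ((-(Real.sqrt (1 + lam * q x) ^ 2)⁻¹) • (c x • fderiv ℝ q x)) x :=
      (hasDerivAt_inv (ne_of_gt (hs_pos x))).comp_hasFDerivAt x (hh' x)
    have h2 := hinv.const_mul (lam / 2)
    refine h2.congr_fderiv ?_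
    rw [smul_smul, smul_smul]
    congr 1
    have := (hs_pos x).ne'
    simp only [hc_def]
    field_simp
    ring
  -- second derivative
  have hh'' : ∀ x : X, HasFDerivAt (fderiv ℝ (fun x => Real.sqrt (1 + lam * q x)))
      (c x • fderiv ℝ (fderiv ℝ q) x
        + ((-(lam ^ 2) / (4 * Real.sqrt (1 + lam * q x) ^ 3)) • fderiv ℝ q x).smulRight
            (fderiv ℝ q x)) x := by
    intro x
    rw [hfd]
    exact (hc' x).smul (hq' x).hasFDerivAt
  refine ⟨hDh, fun x => (hh'' x).differentiableAt, fun x y => ?_⟩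
  have heval : fderiv ℝ (fderiv ℝ (fun x => Real.sqrt (1 + lam * q x))) x y y
      = c x * (fderiv ℝ (fderiv ℝ q) x y y)
        - lam ^ 2 / (4 * Real.sqrt (1 + lam * q x) ^ 3) * (fderiv ℝ q x y) ^ 2 := by
    rw [(hh'' x).fderiv]
    simp [ContinuousLinearMap.add_apply, ContinuousLinearMap.smul_apply,
      ContinuousLinearMap.smulRight_apply, smul_eq_mul]
    ring
  constructor
  · rw [heval]
    have h12 : (1 + lam * q x) ^ ((1 : ℝ) / 2) = Real.sqrt (1 + lam * q x) :=
      (Real.sqrt_eq_rpow _).symm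
    have h32 : (1 + lam * q x) ^ ((3 : ℝ) / 2) = Real.sqrt (1 + lam * q x) ^ 3 := by
      rw [Real.sqrt_eq_rpow, ← Real.rpow_natCast ((1 + lam * q x) ^ ((1:ℝ)/2)) 3,
        ← Real.rpow_mul (hu_pos x).le]
      norm_num
    rw [h12, h32]
    have hs := (hs_pos x).ne'
    simp only [hc_def]
    field_simp
  · rw [heval]
    have hb1 : c x * (fderiv ℝ (fderiv ℝ q) x y y) ≤ c x * (2 * D ^ 2 * ‖y‖ ^ 2) :=
      mul_le_mul_of_nonneg_left (hq'' x y) (hc_pos x).le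
    have hb2 : c x ≤ lam / 2 := by
      rw [hc_def]
      have h1 : (Real.sqrt (1 + lam * q x))⁻¹ ≤ 1 := by
        rw [inv_le_one_iff₀]
        right; exact hs1 x
      nlinarith [hlam.le]
    have hb3 : 0 ≤ lam ^ 2 / (4 * Real.sqrt (1 + lam * q x) ^ 3) * (fderiv ℝ q x y) ^ 2 := by
      have := hs_pos x; positivity
    nlinarith [hb1, hb2, hb3, sq_nonneg (‖y‖), sq_nonneg D, mul_le_mul_of_nonneg_right hb2 (by positivity : (0:ℝ) ≤ 2 * D ^ 2 * ‖y‖ ^ 2)]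
end
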